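/- arXiv:1201.1546 — 3 statements merged into one kernel-verified Lean document; each statement's English description precedes it below -/
import Mathlib

section
/- Let 𝒯 be a mesh in ℝ^d satisfying: (a) the union of the simplices of 𝒯 is a neighborhood of the origin; (b) the vertices of each T ∈ 𝒯 lie in ℤ^d and T has volume 1/d!; and each simplex of 𝒯 has the origin as a vertex. Define γ(𝒯) := min uᵀv/(‖u‖·‖v‖), the minimum being taken over all pairs (u,v) of nonzero vertices of a common simplex T ∈ 𝒯, and assume −1 < γ(𝒯) < 1; set κ(𝒯) := √((1+γ(𝒯))/(1−γ(𝒯))). Then for every M ∈ S_d^+ with κ(M) ≤ κ(𝒯), the mesh 𝒯 is M-reduced (i.e. in addition, for each T ∈ 𝒯 the nonzero vertices v_1,…,v_d of T satisfy v_iᵀ M v_j ≥ 0 for all 1 ≤ i ≤ j ≤ d). -/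
open Matrix
open scoped BigOperators ENNReal Classical

noncomputable section

/-- Euclidean norm of a vector of `ℝ^d`. -/
def euclNorm {d : ℕ} (u : Fin d → ℝ) : ℝ := Real.sqrt (u ⬝ᵥ u)

/-- The norm `‖u‖_M := √(uᵀ M u)` associated to a matrix `M`. -/
def normM {d : ℕ} (M : Matrix (Fin d) (Fin d) ℝ) (u : Fin d → ℝ) : ℝ :=
  Real.sqrt (u ⬝ᵥ M.mulVec u)

/-- Operator norm of a matrix, with respect to the euclidean norm. -/
def opNorm {d : ℕ} (M : Matrix (Fin d) (Fin d) ℝ) : ℝ :=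
  sSup {r : ℝ | ∃ u : Fin d → ℝ, euclNorm u = 1 ∧ r = euclNorm (M.mulVec u)}

/-- Anisotropy ratio `κ(M) := max ‖u‖_M/‖v‖_M` over euclidean-unit vectors `u, v`. -/
def kappa {d : ℕ} (M : Matrix (Fin d) (Fin d) ℝ) : ℝ :=
  sSup {r : ℝ | ∃ u v : Fin d → ℝ,
    euclNorm u = 1 ∧ euclNorm v = 1 ∧ r = normM M u / normM M v}

/-- `z` has integer coordinates, i.e. `z ∈ ℤ^d`. -/
def IsIntVec {d : ℕ} (z : Fin d → ℝ) : Prop := ∀ i, ∃ m : ℤ, z i = (m : ℝ)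

/-- `z` belongs to the sub-lattice `u_0 ℤ + ⋯ + u_{k-1} ℤ` generated by the
first `k` vectors of the family `u`. -/
def InLatticeSpan {d : ℕ} (u : Fin d → Fin d → ℝ) (k : ℕ) (z : Fin d → ℝ) : Prop :=
  ∃ c : Fin d → ℤ, (∀ i : Fin d, ¬ ((i : ℕ) < k) → c i = 0) ∧ z = ∑ i, (c i : ℝ) • u i

/-- `u` is an `M`-reduced basis of `ℤ^d`: a basis of the lattice `ℤ^d`
(integer entries, determinant `±1`) such that each `u k` minimizes `‖·‖_M`
among integer vectors outside the sub-lattice spanned by `u 0, …, u (k-1)`. -/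
def IsReducedBasis {d : ℕ} (M : Matrix (Fin d) (Fin d) ℝ) (u : Fin d → Fin d → ℝ) : Prop :=
  (∀ i, IsIntVec (u i)) ∧ |(Matrix.of u).det| = 1 ∧
  ∀ k : Fin d, ∀ z : Fin d → ℝ, IsIntVec z → ¬ InLatticeSpan u (k : ℕ) z →
    normM M (u k) ≤ normM M z

/-- A simplex of `ℝ^d`, described by its vertex set: `d+1` affinely independent points. -/
def IsSimplex (d : ℕ) (V : Finset (Fin d → ℝ)) : Prop :=
  V.card = d + 1 ∧ AffineIndependent ℝ (fun v : V => (v : Fin d → ℝ))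

/-- A (conforming) mesh: a finite collection of simplices such that the intersection
of any two of them is the convex hull of their common vertices. -/
def IsMesh (d : ℕ) (𝒯 : Finset (Finset (Fin d → ℝ))) : Prop :=
  (∀ V ∈ 𝒯, IsSimplex d V) ∧
  ∀ S ∈ 𝒯, ∀ T ∈ 𝒯,
    (convexHull ℝ (S : Set (Fin d → ℝ))) ∩ (convexHull ℝ (T : Set (Fin d → ℝ)))
      = convexHull ℝ ((S ∩ T : Finset (Fin d → ℝ)) : Set (Fin d → ℝ))

/-- An `M`-reduced mesh. -/
def IsReducedMesh {d : ℕ} (M : Matrix (Fin d) (Fin d) ℝ)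
    (𝒯 : Finset (Finset (Fin d → ℝ))) : Prop :=
  IsMesh d 𝒯 ∧
  (⋃ V ∈ 𝒯, convexHull ℝ (V : Set (Fin d → ℝ))) ∈ nhds (0 : Fin d → ℝ) ∧
  (∀ V ∈ 𝒯, ∀ v ∈ V, IsIntVec v) ∧
  (∀ V ∈ 𝒯, MeasureTheory.volume (convexHull ℝ (V : Set (Fin d → ℝ)))
      = ENNReal.ofReal (1 / (Nat.factorial d))) ∧
  (∀ V ∈ 𝒯, (0 : Fin d → ℝ) ∈ V) ∧
  (∀ V ∈ 𝒯, ∀ v ∈ V, ∀ w ∈ V, v ≠ 0 → w ≠ 0 → 0 ≤ v ⬝ᵥ M.mulVec w)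

/-- `z` is a vertex of the mesh `𝒯`. -/
def IsMeshVertex {d : ℕ} (𝒯 : Finset (Finset (Fin d → ℝ))) (z : Fin d → ℝ) : Prop :=
  ∃ V ∈ 𝒯, z ∈ V

/-- The multiplicative distance `d_×(M,N) := sup_{u ≠ 0} |ln ‖u‖_M − ln ‖u‖_N|`. -/
def dTimes {d : ℕ} (M N : Matrix (Fin d) (Fin d) ℝ) : ℝ :=
  sSup {r : ℝ | ∃ u : Fin d → ℝ, u ≠ 0 ∧ r = |Real.log (normM M u) - Real.log (normM N u)|}

/-- The periodic unit box `Ω = (ℝ/ℤ)^d`. -/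
abbrev Torus (d : ℕ) : Type := Fin d → AddCircle (1 : ℝ)

/-- Canonical projection `ℝ^d → (ℝ/ℤ)^d`. -/
def toTorus {d : ℕ} (x : Fin d → ℝ) : Torus d := fun i => (x i : AddCircle (1 : ℝ))

/-- The grid `Ω_n = {0, 1/n, …, (n-1)/n}^d ⊂ Ω`. -/
def IsGridPoint {d : ℕ} (n : ℕ) (z : Torus d) : Prop :=
  ∃ k : Fin d → ℤ, ∀ i, z i = (((k i : ℝ) / (n : ℝ) : ℝ) : AddCircle (1 : ℝ))

/-- The quotient (periodic) distance on the torus. -/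
def dPer {d : ℕ} (z x : Torus d) : ℝ :=
  sInf {r : ℝ | ∃ Z X : Fin d → ℝ, toTorus Z = z ∧ toTorus X = x ∧ r = euclNorm (Z - X)}

/-- The Hopf–Lax update operator associated to the matrix `M`, the stencil (mesh) `𝒯`,
and the grid scale `1/n`: minimum over simplices `T ∈ 𝒯`, and over barycentric
coefficients `α ≥ 0` supported on the nonzero vertices of `T` with total mass 1, of
`‖∑ α_v v/n‖_M + ∑ α_v u(z + v/n)` (with the convention `0·∞ = 0`). -/
def hopfLax {d : ℕ} (M : Matrix (Fin d) (Fin d) ℝ) (𝒯 : Finset (Finset (Fin d → ℝ)))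
    (n : ℕ) (u : Torus d → ℝ≥0∞) (z : Torus d) : ℝ≥0∞ :=
  ⨅ (T : Finset (Fin d → ℝ)) (_ : T ∈ 𝒯) (α : (Fin d → ℝ) → ℝ)
    (_ : ∀ w, 0 ≤ α w) (_ : α 0 = 0) (_ : ∑ w ∈ T, α w = 1),
    ENNReal.ofReal (normM M ((n : ℝ)⁻¹ • ∑ w ∈ T, α w • w)) +
      ∑ w ∈ T, ENNReal.ofReal (α w) * u (z + toTorus ((n : ℝ)⁻¹ • w))

/-- `u` solves the discrete fixed point system: `u(0) = 0` and
`u(z) = Λ_n(u,z)` at every other grid point `z`. -/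
def SolvesDiscrete {d : ℕ} (𝓜 : Torus d → Matrix (Fin d) (Fin d) ℝ)
    (𝒯 : Torus d → Finset (Finset (Fin d → ℝ))) (n : ℕ) (u : Torus d → ℝ≥0∞) : Prop :=
  u 0 = 0 ∧ ∀ z : Torus d, IsGridPoint n z → z ≠ 0 → u z = hopfLax (𝓜 z) (𝒯 z) n u z



section AuxLemmas

variable {d : ℕ}

lemma dp_self_nonneg (u : Fin d → ℝ) : 0 ≤ u ⬝ᵥ u :=
  Finset.sum_nonneg fun i _ => mul_self_nonneg _

lemma dp_self_pos {u : Fin d → ℝ} (hu : u ≠ 0) : 0 < u ⬝ᵥ u := by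
  rcases Function.ne_iff.mp hu with ⟨i, hi⟩
  exact Finset.sum_pos' (fun j _ => mul_self_nonneg _)
    ⟨i, Finset.mem_univ i, mul_self_pos.mpr hi⟩

lemma euclNorm_pos {u : Fin d → ℝ} (hu : u ≠ 0) : 0 < euclNorm u :=
  Real.sqrt_pos.mpr (dp_self_pos hu)

lemma euclNorm_sq (u : Fin d → ℝ) : euclNorm u ^ 2 = u ⬝ᵥ u :=
  Real.sq_sqrt (dp_self_nonneg u)

lemma euclNorm_smul (t : ℝ) (u : Fin d → ℝ) : euclNorm (t • u) = |t| * euclNorm u := by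
  unfold euclNorm
  rw [smul_dotProduct, dotProduct_smul, smul_eq_mul, smul_eq_mul, ← mul_assoc, ← sq,
    Real.sqrt_mul (sq_nonneg t), Real.sqrt_sq_eq_abs]

lemma normM_nonneg (M : Matrix (Fin d) (Fin d) ℝ) (u : Fin d → ℝ) : 0 ≤ normM M u :=
  Real.sqrt_nonneg _

lemma psd_dp {M : Matrix (Fin d) (Fin d) ℝ} (hM : M.PosSemidef) (u : Fin d → ℝ) :
    0 ≤ u ⬝ᵥ M.mulVec u := by simpa using hM.dotProduct_mulVec_nonneg u

lemma pd_dp {M : Matrix (Fin d) (Fin d) ℝ} (hM : M.PosDef) {u : Fin d → ℝ} (hu : u ≠ 0) :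
    0 < u ⬝ᵥ M.mulVec u := by simpa using hM.dotProduct_mulVec_pos hu

lemma normM_sq {M : Matrix (Fin d) (Fin d) ℝ} (hM : M.PosDef) (u : Fin d → ℝ) :
    normM M u ^ 2 = u ⬝ᵥ M.mulVec u :=
  Real.sq_sqrt (psd_dp hM.posSemidef u)

lemma normM_pos {M : Matrix (Fin d) (Fin d) ℝ} (hM : M.PosDef) {u : Fin d → ℝ} (hu : u ≠ 0) :
    0 < normM M u := Real.sqrt_pos.mpr (pd_dp hM hu)

lemma normM_smul (M : Matrix (Fin d) (Fin d) ℝ) (t : ℝ) (u : Fin d → ℝ) :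
    normM M (t • u) = |t| * normM M u := by
  unfold normM
  rw [M.mulVec_smul, smul_dotProduct, dotProduct_smul, smul_eq_mul, smul_eq_mul, ← mul_assoc,
    ← sq, Real.sqrt_mul (sq_nonneg t), Real.sqrt_sq_eq_abs]

lemma normM_continuous (M : Matrix (Fin d) (Fin d) ℝ) : Continuous (normM M) := by
  unfold normM
  apply Real.continuous_sqrt.comp
  apply continuous_finset_sum
  intro i _
  apply Continuous.mul (continuous_apply i)
  have : (fun x : Fin d → ℝ => (M *ᵥ x) i) = fun x => ∑ j, M i j * x j := by
    funext x; rfl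
  rw [this]
  exact continuous_finset_sum _ fun j _ => continuous_const.mul (continuous_apply j)

lemma euclNorm_continuous : Continuous (euclNorm (d := d)) := by
  unfold euclNorm
  apply Real.continuous_sqrt.comp
  apply continuous_finset_sum
  intro i _
  exact (continuous_apply i).mul (continuous_apply i)

lemma mulVec_symm {M : Matrix (Fin d) (Fin d) ℝ} (hM : M.IsHermitian) (u v : Fin d → ℝ) :
    u ⬝ᵥ M.mulVec v = v ⬝ᵥ M.mulVec u := by
  have hMt : Mᵀ = M := by
    have h := hM
    rwa [Matrix.IsHermitian, Matrix.conjTranspose_eq_transpose_of_trivial] at h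
  rw [Matrix.dotProduct_mulVec, ← Matrix.mulVec_transpose, hMt, dotProduct_comm]

lemma ratio_le_kappa (M : Matrix (Fin d) (Fin d) ℝ) (hM : M.PosDef) {u v : Fin d → ℝ}
    (hu : euclNorm u = 1) (hv : euclNorm v = 1) :
    normM M u / normM M v ≤ kappa M := by
  set S : Set (Fin d → ℝ) := {x | euclNorm x = 1} with hSdef
  have hne0 : ∀ x ∈ S, x ≠ 0 := by
    intro x hx h0
    have hx1 : euclNorm x = 1 := hx
    rw [h0] at hx1
    simp [euclNorm, zero_dotProduct] at hx1
  have hSc : IsClosed S := isClosed_eq euclNorm_continuous continuous_const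
  have hSsub : S ⊆ Metric.closedBall 0 1 := by
    intro x hx
    rw [Metric.mem_closedBall, dist_zero_right]
    rw [pi_norm_le_iff_of_nonneg zero_le_one]
    intro i
    have h1 : x ⬝ᵥ x = 1 := by
      have h := euclNorm_sq x
      rw [show euclNorm x = 1 from hx] at h
      simpa using h.symm
    have hle : x i * x i ≤ 1 := by
      rw [← h1]
      exact Finset.single_le_sum (f := fun j => x j * x j)
        (fun j _ => mul_self_nonneg _) (Finset.mem_univ i)
    exact abs_le_one_iff_mul_self_le_one.mpr hle
  have hScomp : IsCompact S := (isCompact_closedBall 0 1).of_isClosed_subset hSc hSsub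
  obtain ⟨u0, hu0, hmin⟩ := hScomp.exists_isMinOn ⟨u, hu⟩ (normM_continuous M).continuousOn
  obtain ⟨u1, hu1, hmax⟩ := hScomp.exists_isMaxOn ⟨u, hu⟩ (normM_continuous M).continuousOn
  have hA : 0 < normM M u0 := normM_pos hM (hne0 u0 hu0)
  have hbdd : BddAbove {r : ℝ | ∃ x y : Fin d → ℝ,
      euclNorm x = 1 ∧ euclNorm y = 1 ∧ r = normM M x / normM M y} := by
    refine ⟨normM M u1 / normM M u0, ?_⟩
    rintro r ⟨x, y, hx, hy, rfl⟩
    have hxB : normM M x ≤ normM M u1 := hmax hx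
    have hAy : normM M u0 ≤ normM M y := hmin hy
    exact div_le_div₀ (le_trans (normM_nonneg M x) hxB) hxB hA hAy
  exact le_csSup hbdd ⟨u, v, hu, hv, rfl⟩

lemma key_nonneg {M : Matrix (Fin d) (Fin d) ℝ} (hM : M.PosDef) {γ : ℝ}
    (hγgt : -1 < γ) (hγlt : γ < 1)
    (hκ : kappa M ≤ Real.sqrt ((1 + γ) / (1 - γ)))
    {u w : Fin d → ℝ} (hu : euclNorm u = 1) (hw : euclNorm w = 1)
    (hc : γ ≤ u ⬝ᵥ w) : 0 ≤ u ⬝ᵥ M.mulVec w := by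
  set c : ℝ := u ⬝ᵥ w with hcdef
  have huu : u ⬝ᵥ u = 1 := by
    have h := euclNorm_sq u; rw [hu] at h; simpa using h.symm
  have hww : w ⬝ᵥ w = 1 := by
    have h := euclNorm_sq w; rw [hw] at h; simpa using h.symm
  set m : Fin d → ℝ := u - w with hmdef
  set p : Fin d → ℝ := u + w with hpdef
  have hwu : w ⬝ᵥ u = c := by rw [dotProduct_comm]
  have hpp : p ⬝ᵥ p = 2 + 2 * c := by
    simp only [hpdef, add_dotProduct, dotProduct_add, huu, hww, hwu, ← hcdef]
    ring
  have hmm : m ⬝ᵥ m = 2 - 2 * c := by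
    simp only [hmdef, sub_dotProduct, dotProduct_sub, huu, hww, hwu, ← hcdef]
    ring
  have hsym : w ⬝ᵥ M.mulVec u = u ⬝ᵥ M.mulVec w := mulVec_symm hM.1 w u
  have hpol : p ⬝ᵥ M.mulVec p - m ⬝ᵥ M.mulVec m = 4 * (u ⬝ᵥ M.mulVec w) := by
    simp only [hpdef, hmdef, Matrix.mulVec_add, Matrix.mulVec_sub, add_dotProduct,
      sub_dotProduct, dotProduct_add, dotProduct_sub, hsym]
    ring
  by_cases hm0 : m = 0
  · have huw : u = w := sub_eq_zero.mp hm0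
    rw [huw]
    exact psd_dp hM.posSemidef w
  · have hmmpos : 0 < m ⬝ᵥ m := dp_self_pos hm0
    have hc1 : c < 1 := by rw [hmm] at hmmpos; linarith
    have hcm1 : -1 < c := lt_of_lt_of_le hγgt hc
    have hppos : 0 < p ⬝ᵥ p := by rw [hpp]; linarith
    have hp0 : p ≠ 0 := by
      intro h
      rw [h] at hppos
      simp [zero_dotProduct] at hppos
    have h1γ : (0:ℝ) < 1 - γ := by linarith
    set nm : ℝ := euclNorm m with hnmdef
    set np : ℝ := euclNorm p with hnpdef
    have hnm : 0 < nm := euclNorm_pos hm0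
    have hnp : 0 < np := euclNorm_pos hp0
    have hum : euclNorm (nm⁻¹ • m) = 1 := by
      rw [euclNorm_smul, abs_of_pos (inv_pos.mpr hnm), ← hnmdef]
      field_simp
    have hup : euclNorm (np⁻¹ • p) = 1 := by
      rw [euclNorm_smul, abs_of_pos (inv_pos.mpr hnp), ← hnpdef]
      field_simp
    have hrat : normM M (nm⁻¹ • m) / normM M (np⁻¹ • p) ≤ Real.sqrt ((1 + γ) / (1 - γ)) :=
      (ratio_le_kappa M hM hum hup).trans hκ
    rw [normM_smul, normM_smul, abs_of_pos (inv_pos.mpr hnm), abs_of_pos (inv_pos.mpr hnp)]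
      at hrat
    have hNp : 0 < normM M p := normM_pos hM hp0
    have hpos' : 0 < np⁻¹ * normM M p := mul_pos (inv_pos.mpr hnp) hNp
    have h2 : nm⁻¹ * normM M m ≤ Real.sqrt ((1 + γ) / (1 - γ)) * (np⁻¹ * normM M p) :=
      (div_le_iff₀ hpos').mp hrat
    have hkey : nm * Real.sqrt ((1 + γ) / (1 - γ)) ≤ np := by
      have hnm' : nm = Real.sqrt (2 - 2 * c) := by
        rw [hnmdef]; unfold euclNorm; rw [hmm]
      have hnp' : np = Real.sqrt (2 + 2 * c) := by
        rw [hnpdef]; unfold euclNorm; rw [hpp]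
      rw [hnm', hnp', ← Real.sqrt_mul (by linarith : (0:ℝ) ≤ 2 - 2 * c)]
      apply Real.sqrt_le_sqrt
      rw [← mul_div_assoc, div_le_iff₀ h1γ]
      nlinarith [hc]
    have hNm : normM M m ≤ normM M p := by
      have hKnn : 0 ≤ Real.sqrt ((1 + γ) / (1 - γ)) := Real.sqrt_nonneg _
      calc normM M m = nm * (nm⁻¹ * normM M m) := by
            field_simp
        _ ≤ nm * (Real.sqrt ((1 + γ) / (1 - γ)) * (np⁻¹ * normM M p)) :=
            mul_le_mul_of_nonneg_left h2 hnm.le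
        _ = (nm * Real.sqrt ((1 + γ) / (1 - γ))) * np⁻¹ * normM M p := by ring
        _ ≤ np * np⁻¹ * normM M p := by
            apply mul_le_mul_of_nonneg_right _ (normM_nonneg M p)
            exact mul_le_mul_of_nonneg_right hkey (inv_pos.mpr hnp).le
        _ = normM M p := by field_simp
    have hsq : m ⬝ᵥ M.mulVec m ≤ p ⬝ᵥ M.mulVec p := by
      rw [← normM_sq hM, ← normM_sq hM]
      exact pow_le_pow_left₀ (normM_nonneg M m) hNm 2
    linarith [hpol]

end AuxLemmas

/-- Proposition `propGammaT`: a mesh satisfying (a), (b) and having the origin as a vertex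
of each simplex is `M`-reduced for every symmetric positive definite `M` with
`κ(M) ≤ κ(𝒯) = √((1+γ(𝒯))/(1−γ(𝒯)))`. -/
theorem stmt0 {d : ℕ} (𝒯 : Finset (Finset (Fin d → ℝ)))
    (hmesh : IsMesh d 𝒯)
    (hnbhd : (⋃ V ∈ 𝒯, convexHull ℝ (V : Set (Fin d → ℝ))) ∈ nhds (0 : Fin d → ℝ))
    (hint : ∀ V ∈ 𝒯, ∀ v ∈ V, IsIntVec v)
    (hvol : ∀ V ∈ 𝒯, MeasureTheory.volume (convexHull ℝ (V : Set (Fin d → ℝ)))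
      = ENNReal.ofReal (1 / (Nat.factorial d)))
    (hzero : ∀ V ∈ 𝒯, (0 : Fin d → ℝ) ∈ V)
    (γ : ℝ)
    (hγ : IsLeast {r : ℝ | ∃ V ∈ 𝒯, ∃ u ∈ V, ∃ v ∈ V, u ≠ 0 ∧ v ≠ 0 ∧
      r = (u ⬝ᵥ v) / (euclNorm u * euclNorm v)} γ)
    (hγgt : -1 < γ) (hγlt : γ < 1)
    (M : Matrix (Fin d) (Fin d) ℝ) (hM : M.PosDef)
    (hκ : kappa M ≤ Real.sqrt ((1 + γ) / (1 - γ))) :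
    IsReducedMesh M 𝒯 := by
  refine ⟨hmesh, hnbhd, hint, hvol, hzero, ?_⟩
  intro V hV v hv w hw hv0 hw0
  have ha : 0 < euclNorm v := euclNorm_pos hv0
  have hb : 0 < euclNorm w := euclNorm_pos hw0
  set a : ℝ := euclNorm v with hadef
  set b : ℝ := euclNorm w with hbdef
  have hγle : γ ≤ (v ⬝ᵥ w) / (a * b) := hγ.2 ⟨V, hV, v, hv, w, hw, hv0, hw0, rfl⟩
  have hudot : (a⁻¹ • v) ⬝ᵥ (b⁻¹ • w) = (v ⬝ᵥ w) / (a * b) := by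
    rw [smul_dotProduct, dotProduct_smul, smul_eq_mul, smul_eq_mul]
    field_simp
  have hunorm : euclNorm (a⁻¹ • v) = 1 := by
    rw [euclNorm_smul, abs_of_pos (inv_pos.mpr ha), ← hadef]
    field_simp
  have hwnorm : euclNorm (b⁻¹ • w) = 1 := by
    rw [euclNorm_smul, abs_of_pos (inv_pos.mpr hb), ← hbdef]
    field_simp
  have hcγ : γ ≤ (a⁻¹ • v) ⬝ᵥ (b⁻¹ • w) := by rw [hudot]; exact hγle
  have hk := key_nonneg hM hγgt hγlt hκ hunorm hwnorm hcγ
  rw [M.mulVec_smul, smul_dotProduct, dotProduct_smul, smul_eq_mul, smul_eq_mul] at hk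
  have : 0 ≤ (a * b) * (a⁻¹ * (b⁻¹ * (v ⬝ᵥ M.mulVec w))) :=
    mul_nonneg (mul_pos ha hb).le hk
  have heq : (a * b) * (a⁻¹ * (b⁻¹ * (v ⬝ᵥ M.mulVec w))) = v ⬝ᵥ M.mulVec w := by
    field_simp
  linarith [heq ▸ this]


end
end

section
/- Let 1 ≤ d ≤ 4 and let M ∈ S_d^+. Then there exists an M-reduced basis of ℤ^d; that is, a d-tuple (u_1,…,u_d) of vectors of ℤ^d with |det(u_1,…,u_d)| = 1 such that for each 1 ≤ k ≤ d, the vector u_k minimizes ‖z‖_M among all z ∈ ℤ^d \ (u_1ℤ + ⋯ + u_{k−1}ℤ) (for k = 1, among all z ∈ ℤ^d \ {0}). -/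
open Matrix
open scoped BigOperators ENNReal Classical

noncomputable section

section AuxReducedBasis
open Submodule

/-- coefficient description of membership in the span of an image. -/
lemma mem_span_image_iff_coeff {R : Type*} [CommRing R] {W : Type*} [AddCommGroup W] [Module R W]
    {d : ℕ} (b : Fin d → W) (s : Set (Fin d)) (z : W) :
    z ∈ Submodule.span R (b '' s) ↔
      ∃ c : Fin d → R, (∀ i, i ∉ s → c i = 0) ∧ z = ∑ i, c i • b i := by
  constructor
  · intro hz
    have : Fintype ↥s := Fintype.ofFinite _
    rw [Set.image_eq_range] at hz
    obtain ⟨c, hc⟩ := (Submodule.mem_span_range_iff_exists_fun R).1 hz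
    set c' : Fin d → R := fun i => if h : i ∈ s then c ⟨i, h⟩ else 0 with hc'
    refine ⟨c', fun i hi => by simp [hc', hi], ?_⟩
    have h1 : ∑ i ∈ s.toFinset, c' i • b i = ∑ i, c' i • b i := by
      refine Finset.sum_subset (Finset.subset_univ _) ?_
      intro x _ hx
      rw [Set.mem_toFinset] at hx
      simp [hc', hx]
    have h2 : ∑ i ∈ s.toFinset, c' i • b i = ∑ i : ↥s, c' i • b i := by
      refine Finset.sum_subtype _ (fun x => Set.mem_toFinset) _
    rw [← hc, ← h1, h2]
    refine Finset.sum_congr rfl (fun x _ => ?_)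
    simp [hc', x.2, Set.restrict]
  · rintro ⟨c, hc0, rfl⟩
    refine Submodule.sum_mem _ (fun i _ => ?_)
    by_cases h : i ∈ s
    · exact Submodule.smul_mem _ _ (Submodule.subset_span ⟨i, h, rfl⟩)
    · simp [hc0 i h]

variable {V : Type*} [NormedAddCommGroup V] [InnerProductSpace ℝ V] [FiniteDimensional ℝ V]

lemma span_int_le_span_real (s : Set V) :
    (Submodule.span ℤ s : Set V) ⊆ (Submodule.span ℝ s : Set V) := by
  intro x hx
  have : Submodule.span ℤ s ≤ (Submodule.span ℝ s).restrictScalars ℤ :=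
    Submodule.span_le.2 (fun y hy => Submodule.subset_span hy)
  exact this hx

/-- Babai-style rounding lemma. -/
lemma babai : ∀ (k : ℕ) (c : Fin k → V) (x : V), x ∈ Submodule.span ℝ (Set.range c) →
    ∃ l ∈ Submodule.span ℤ (Set.range c), ‖x - l‖ ^ 2 ≤ (∑ j, ‖c j‖ ^ 2) / 4 := by
  intro k
  induction k with
  | zero =>
    intro c x hx
    rw [Set.range_eq_empty, Submodule.span_empty, Submodule.mem_bot] at hx
    exact ⟨0, Submodule.zero_mem _, by simp [hx]⟩
  | succ k IH =>
    intro c x hx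
    obtain ⟨t, ht⟩ := (Submodule.mem_span_range_iff_exists_fun ℝ).1 hx
    set F := Submodule.span ℝ (Set.range (Fin.init c)) with hF
    set ck := c (Fin.last k) with hck
    set s := t (Fin.last k) with hs
    set pck : V := (orthogonalProjection F ck : V) with hpck
    set e := ck - pck with he
    have hpckF : pck ∈ F := SetLike.coe_mem _
    have heF : e ∈ Fᗮ := sub_starProjection_mem_orthogonal ck
    set y : V := ∑ i : Fin k, t i.castSucc • c i.castSucc with hy
    have hyF : y ∈ F := by
      refine Submodule.sum_mem _ (fun i _ => Submodule.smul_mem _ _ ?_)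
      exact Submodule.subset_span ⟨i, rfl⟩
    have hxdec : x = y + s • ck := by
      rw [← ht, Fin.sum_univ_castSucc]
    set j := round s with hj
    set x₀ := y + (s - (j : ℝ)) • pck with hx₀
    have hx₀F : x₀ ∈ F := Submodule.add_mem _ hyF (Submodule.smul_mem _ _ hpckF)
    have hx₀span : x₀ ∈ Submodule.span ℝ (Set.range (Fin.init c)) := hx₀F
    obtain ⟨l', hl'mem, hl'⟩ := IH (Fin.init c) x₀ hx₀span
    have hl'F : l' ∈ F := span_int_le_span_real _ hl'mem
    refine ⟨l' + j • ck, ?_, ?_⟩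
    · refine Submodule.add_mem _ ?_ (Submodule.smul_mem _ j (Submodule.subset_span ⟨Fin.last k, rfl⟩))
      refine Submodule.span_mono ?_ hl'mem
      rintro v ⟨i, rfl⟩
      exact ⟨i.castSucc, rfl⟩
    · have hxl : x - (l' + j • ck) = (x₀ - l') + (s - (j : ℝ)) • e := by
        rw [hxdec, hx₀, he]
        rw [← Int.cast_smul_eq_zsmul ℝ]
        module
      have hinner : (inner ℝ (x₀ - l') ((s - (j : ℝ)) • e) : ℝ) = 0 := by
        rw [real_inner_smul_right]
        rw [Submodule.inner_right_of_mem_orthogonal (Submodule.sub_mem _ hx₀F hl'F) heF]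
        ring
      have hnorm : ‖x - (l' + j • ck)‖ ^ 2 = ‖x₀ - l'‖ ^ 2 + ‖(s - (j : ℝ)) • e‖ ^ 2 := by
        rw [hxl, norm_add_sq_real, hinner]; ring
      have hse : ‖(s - (j : ℝ)) • e‖ ^ 2 ≤ (1 / 4) * ‖ck‖ ^ 2 := by
        rw [norm_smul]
        have h1 : |s - (j : ℝ)| ≤ 1 / 2 := abs_sub_round s
        have h2 : ‖e‖ ^ 2 ≤ ‖ck‖ ^ 2 := by
          have h0 : (inner ℝ pck e : ℝ) = 0 :=
            Submodule.inner_right_of_mem_orthogonal hpckF heF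
          have hck2 : ck = pck + e := by rw [he]; abel
          have hpy : ‖ck‖ ^ 2 = ‖pck‖ ^ 2 + ‖e‖ ^ 2 := by
            calc ‖ck‖ ^ 2 = ‖pck + e‖ ^ 2 := by rw [← hck2]
            _ = ‖pck‖ ^ 2 + 2 * (inner ℝ pck e : ℝ) + ‖e‖ ^ 2 := norm_add_sq_real _ _
            _ = ‖pck‖ ^ 2 + ‖e‖ ^ 2 := by rw [h0]; ring
          nlinarith [sq_nonneg ‖pck‖]
        have h3 : ‖(s - (j:ℝ))‖ = |s - (j:ℝ)| := Real.norm_eq_abs _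
        have h4 : |s - (j:ℝ)| ^ 2 ≤ 1 / 4 := by nlinarith [abs_nonneg (s - (j:ℝ))]
        rw [mul_pow, h3]
        exact mul_le_mul h4 h2 (sq_nonneg _) (by norm_num)
      have hsum : (∑ i : Fin (k+1), ‖c i‖ ^ 2)
          = (∑ i : Fin k, ‖Fin.init c i‖ ^ 2) + ‖ck‖ ^ 2 := by
        rw [Fin.sum_univ_castSucc]
        rfl
      rw [hnorm, hsum]
      have := hl'
      linarith
section ESsection


variable {d : ℕ} {M : Matrix (Fin d) (Fin d) ℝ}

def ES (_hM : M.PosDef) : Type := Fin d → ℝ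

instance (hM : M.PosDef) : AddCommGroup (ES hM) := Pi.addCommGroup
instance (hM : M.PosDef) : Module ℝ (ES hM) := Pi.module _ _ _
noncomputable instance (hM : M.PosDef) : NormedAddCommGroup (ES hM) :=
  Matrix.toNormedAddCommGroup M hM
noncomputable instance (hM : M.PosDef) : InnerProductSpace ℝ (ES hM) :=
  Matrix.toInnerProductSpace M hM.posSemidef
instance (hM : M.PosDef) : FiniteDimensional ℝ (ES hM) :=
  inferInstanceAs (FiniteDimensional ℝ (Fin d → ℝ))

lemma finrank_ES (hM : M.PosDef) : Module.finrank ℝ (ES hM) = d := by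
  have : Module.finrank ℝ (Fin d → ℝ) = d := by simp
  exact this

lemma norm_ES (hM : M.PosDef) (x : ES hM) :
    ‖x‖ = Real.sqrt ((x : Fin d → ℝ) ⬝ᵥ M.mulVec (x : Fin d → ℝ)) := by
  rw [norm_eq_sqrt_real_inner]
  show Real.sqrt ((M *ᵥ x) ⬝ᵥ star x) = _
  exact congrArg Real.sqrt (dotProduct_comm _ _)

def bES (hM : M.PosDef) : Module.Basis (Fin d) ℝ (ES hM) := Pi.basisFun ℝ (Fin d)

def LatM (hM : M.PosDef) : Submodule ℤ (ES hM) := Submodule.span ℤ (Set.range (bES hM))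

lemma mem_Lat_iff (hM : M.PosDef) (x : ES hM) :
    x ∈ LatM hM ↔ IsIntVec (x : Fin d → ℝ) := by
  rw [LatM, Module.Basis.mem_span_iff_repr_mem]
  constructor
  · intro h i
    obtain ⟨m, hm⟩ := h i
    have e := Pi.basisFun_repr (R := ℝ) (η := Fin d) (x := (x : Fin d → ℝ)) (i := i)
    exact ⟨m, by simp [bES] at hm; exact (hm.trans e).symm⟩
  · intro h i
    obtain ⟨m, hm⟩ := h i
    have e := Pi.basisFun_repr (R := ℝ) (η := Fin d) (x := (x : Fin d → ℝ)) (i := i)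
    exact ⟨m, by simp [bES]; exact hm.symm.trans e.symm⟩

lemma Lat_inter_finite (hM : M.PosDef) (R : ℝ) :
    {z : ES hM | z ∈ LatM hM ∧ ‖z‖ ≤ R}.Finite := by
  have hd : DiscreteTopology (LatM hM : Set (ES hM)) :=
    inferInstanceAs (DiscreteTopology (span ℤ (Set.range (bES hM))))
  have hc : IsClosed (LatM hM : Set (ES hM)) := by
    have : DiscreteTopology (LatM hM).toAddSubgroup :=
      inferInstanceAs (DiscreteTopology (LatM hM : Set (ES hM)))
    exact AddSubgroup.isClosed_of_discrete (H := (LatM hM).toAddSubgroup)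
  have : {z : ES hM | z ∈ LatM hM ∧ ‖z‖ ≤ R}
      = Metric.closedBall 0 R ∩ (LatM hM : Set (ES hM)) := by
    ext z
    simp [Metric.mem_closedBall, dist_zero_right, and_comm]
  rw [this]
  exact Metric.finite_isBounded_inter_isClosed DiscreteTopology.isDiscrete Metric.isBounded_closedBall hc

lemma exists_min_norm (hM : M.PosDef) (P : Set (ES hM)) (hP : ∀ z ∈ P, z ∈ LatM hM)
    (hne : P.Nonempty) : ∃ v ∈ P, ∀ z ∈ P, ‖v‖ ≤ ‖z‖ := by
  obtain ⟨z₀, hz₀⟩ := hne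
  have hfin : {z : ES hM | z ∈ P ∧ ‖z‖ ≤ ‖z₀‖}.Finite :=
    (Lat_inter_finite hM ‖z₀‖).subset (fun z hz => ⟨hP z hz.1, hz.2⟩)
  have hne' : hfin.toFinset.Nonempty := ⟨z₀, by simp [hz₀]⟩
  obtain ⟨v, hv, hvmin⟩ := hfin.toFinset.exists_min_image (fun z => ‖z‖) hne'
  rw [Set.Finite.mem_toFinset] at hv
  refine ⟨v, hv.1, fun z hz => ?_⟩
  by_cases h : ‖z‖ ≤ ‖z₀‖
  · exact hvmin z (by rw [Set.Finite.mem_toFinset]; exact ⟨hz, h⟩)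
  · have := hvmin z₀ (by rw [Set.Finite.mem_toFinset]; exact ⟨hz₀, le_refl _⟩)
    push_neg at h
    linarith
variable (hM : M.PosDef)

def SbI (b : Fin d → ES hM) (k : ℕ) : Submodule ℤ (ES hM) :=
  Submodule.span ℤ (b '' {i : Fin d | (i : ℕ) < k})

def FrR (b : Fin d → ES hM) (k : ℕ) : Submodule ℝ (ES hM) :=
  Submodule.span ℝ (b '' {i : Fin d | (i : ℕ) < k})

def GoodP (k : ℕ) (b : Fin d → ES hM) : Prop :=
  (∀ i : Fin d, (i : ℕ) < k → b i ∈ LatM hM) ∧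
  (∀ i : Fin d, (i : ℕ) < k → b i ∉ FrR hM b (i : ℕ)) ∧
  (∀ i : Fin d, (i : ℕ) < k → ∀ z, z ∈ LatM hM → z ∉ SbI hM b (i : ℕ) → ‖b i‖ ≤ ‖z‖) ∧
  (∀ z, z ∈ LatM hM → z ∈ FrR hM b k → z ∈ SbI hM b k)

lemma SbI_mono (b : Fin d → ES hM) {j k : ℕ} (h : j ≤ k) : SbI hM b j ≤ SbI hM b k :=
  Submodule.span_mono (Set.image_mono (fun i hi => lt_of_lt_of_le hi h))

lemma image_lt_eq_range (b : Fin d → ES hM) {k : ℕ} (hk : k ≤ d) :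
    b '' {i : Fin d | (i : ℕ) < k} = Set.range (fun j : Fin k => b (Fin.castLE hk j)) := by
  ext x
  constructor
  · rintro ⟨i, hi, rfl⟩
    exact ⟨⟨(i : ℕ), hi⟩, rfl⟩
  · rintro ⟨j, rfl⟩
    exact ⟨Fin.castLE hk j, by simpa using j.2, rfl⟩

lemma good_zero : GoodP hM 0 (fun _ => 0) := by
  refine ⟨fun i hi => by omega, fun i hi => by omega, fun i hi => by omega, fun z hz hz' => ?_⟩
  have : (fun _ => (0 : ES hM)) '' {i : Fin d | (i : ℕ) < 0} = ∅ := by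
    simp
  rw [FrR, this, Submodule.span_empty, Submodule.mem_bot] at hz'
  rw [hz']
  exact zero_mem _

lemma le_of_sq_le_sq' {a b : ℝ} (h : a ^ 2 ≤ b ^ 2) (ha : 0 ≤ a) (hb : 0 ≤ b) : a ≤ b := by
  nlinarith [sq_nonneg (a - b), sq_nonneg (a + b)]

set_option maxHeartbeats 2000000 in
lemma good_step (hd4 : d ≤ 4) {k : ℕ} (hk : k < d)
    (h : ∃ b, GoodP hM k b) : ∃ b, GoodP hM (k + 1) b := by
  classical
  obtain ⟨b, hmem, hnotin, hgreedy, hprim⟩ := h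
  have hkd : k ≤ d := hk.le
  set F := FrR hM b k with hF
  set S := SbI hM b k with hS
  have hSL : S ≤ LatM hM := by
    rw [hS, SbI]
    refine Submodule.span_le.2 ?_
    rintro x ⟨i, hi, rfl⟩
    exact hmem i hi
  have hSF : ∀ x, x ∈ S → x ∈ F := fun x hx => span_int_le_span_real _ hx
  -- nonemptiness of the complement
  have hex : ∃ z₀, z₀ ∈ LatM hM ∧ z₀ ∉ S := by
    by_contra hcon
    push_neg at hcon
    have htop : (⊤ : Submodule ℝ (ES hM)) ≤ F := by
      rw [← (bES hM).span_eq]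
      refine Submodule.span_le.2 ?_
      rintro x ⟨i, rfl⟩
      exact hSF _ (hcon _ (Submodule.subset_span ⟨i, rfl⟩))
    have h1 : Module.finrank ℝ F = d := by
      have : F = ⊤ := le_antisymm le_top htop
      rw [this, finrank_top, finrank_ES]
    have h2 : Module.finrank ℝ F ≤ k := by
      set c : Fin k → ES hM := fun j => b (Fin.castLE hkd j) with hc
      rw [hF, FrR, image_lt_eq_range hM b hkd, ← hc]
      calc Module.finrank ℝ (Submodule.span ℝ (Set.range c))
          ≤ (Set.range c).toFinset.card := finrank_span_le_card _
      _ = Fintype.card (Set.range c) := Set.toFinset_card _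
      _ ≤ Fintype.card (Fin k) := Fintype.card_range_le c
      _ = k := Fintype.card_fin k
    omega
  obtain ⟨z₀, hz₀L, hz₀S⟩ := hex
  obtain ⟨v₀, hv₀P, hv₀min₀⟩ :=
    exists_min_norm hM {z | z ∈ LatM hM ∧ z ∉ S} (fun z hz => hz.1) ⟨z₀, hz₀L, hz₀S⟩
  obtain ⟨hv₀L, hv₀S⟩ := hv₀P
  have hv₀min : ∀ z, z ∈ LatM hM → z ∉ S → ‖v₀‖ ≤ ‖z‖ := by
    intro z h1 h2
    exact hv₀min₀ z ⟨h1, h2⟩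
  set m := ‖v₀‖ with hm
  have hm0 : 0 < m := by
    rw [hm, norm_pos_iff]
    rintro rfl
    exact hv₀S (zero_mem _)
  have hble : ∀ i : Fin d, (i : ℕ) < k → ‖b i‖ ≤ m := by
    intro i hi
    exact hgreedy i hi v₀ hv₀L (fun hmem' => hv₀S (SbI_mono hM b (le_of_lt hi) hmem'))
  have hv₀F : v₀ ∉ F := fun hin => hv₀S (hprim v₀ hv₀L hin)
  set pv := (orthogonalProjection F v₀ : ES hM) with hpv
  set vp := v₀ - pv with hvp
  have hpvF : pv ∈ F := SetLike.coe_mem _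
  have hvporth : vp ∈ Fᗮ := sub_starProjection_mem_orthogonal v₀
  have hvp0 : vp ≠ 0 := by
    intro h0
    refine hv₀F ?_
    have : v₀ = pv := by rw [hvp] at h0; rw [← sub_eq_zero]; exact h0
    rw [this]; exact hpvF
  set g : ES hM → ℝ := fun x => (inner ℝ vp x : ℝ) / (‖vp‖ ^ 2) with hg
  have hvpn : ‖vp‖ ^ 2 ≠ 0 := pow_ne_zero _ (norm_ne_zero_iff.2 hvp0)
  have gF : ∀ x, x ∈ F → g x = 0 := by
    intro x hx
    have h0 : (inner ℝ vp x : ℝ) = 0 := by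
      have := Submodule.inner_right_of_mem_orthogonal hx hvporth
      rwa [real_inner_comm] at this
    rw [hg]; simp only []; rw [h0, zero_div]
  have gv₀ : g v₀ = 1 := by
    have h2 : (inner ℝ vp pv : ℝ) = 0 := by
      have := Submodule.inner_right_of_mem_orthogonal hpvF hvporth
      rwa [real_inner_comm] at this
    have h1 : (inner ℝ vp v₀ : ℝ) = ‖vp‖ ^ 2 := by
      have hdecv : v₀ = vp + pv := by rw [hvp]; abel
      calc (inner ℝ vp v₀ : ℝ) = (inner ℝ vp (vp + pv) : ℝ) := by rw [← hdecv]
      _ = (inner ℝ vp vp : ℝ) + (inner ℝ vp pv : ℝ) := inner_add_right _ _ _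
      _ = ‖vp‖ ^ 2 := by rw [h2, real_inner_self_eq_norm_sq]; ring
    rw [hg]; simp only []; rw [h1, div_self hvpn]
  have g_add : ∀ x y, g (x + y) = g x + g y := by
    intro x y; rw [hg]; simp only []; rw [inner_add_right]; ring
  have g_smulR : ∀ (t : ℝ) (x : ES hM), g (t • x) = t * g x := by
    intro t x; rw [hg]; simp only []; rw [real_inner_smul_right]; ring
  have g_smulZ : ∀ (n : ℤ) (x : ES hM), g (n • x) = n * g x := by
    intro n x
    rw [← Int.cast_smul_eq_zsmul ℝ]
    exact g_smulR _ _
  have g_sub : ∀ x y, g (x - y) = g x - g y := by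
    intro x y
    have := g_add (x - y) y
    simp only [sub_add_cancel] at this
    linarith
  set FV := F ⊔ Submodule.span ℝ {v₀} with hFV
  have hdec : ∀ x, x ∈ FV → x - g x • v₀ ∈ F := by
    intro x hx
    rw [hFV, Submodule.mem_sup] at hx
    obtain ⟨f, hf, r, hr, rfl⟩ := hx
    obtain ⟨t, rfl⟩ := Submodule.mem_span_singleton.1 hr
    have : g (f + t • v₀) = t := by
      rw [g_add, g_smulR, gF f hf, gv₀]; ring
    rw [this]
    simpa using hf
  set T := LatM hM ⊓ FV.restrictScalars ℤ with hT
  have hST : S ≤ T := by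
    rw [hT]
    refine le_inf hSL ?_
    intro x hx
    rw [Submodule.restrictScalars_mem]
    exact Submodule.mem_sup_left (hSF x hx)
  have hv₀FV : v₀ ∈ FV := Submodule.mem_sup_right (Submodule.mem_span_singleton_self v₀)
  have hv₀T : v₀ ∈ T := by
    exact Submodule.mem_inf.2 ⟨hv₀L, hv₀FV⟩
  have hTL : T ≤ LatM hM := inf_le_left
  have hTFV : ∀ x, x ∈ T → x ∈ FV := by
    intro x hx
    rw [hT] at hx
    exact (Submodule.restrictScalars_mem _ _ _).1 hx.2
  -- the reduction lemma
  have reduce : ∀ (t : ℝ) (y : ES hM), y ∈ F →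
      ∃ l, l ∈ S ∧ ‖t • v₀ + y - l‖ ^ 2 ≤ t ^ 2 * m ^ 2 + 3 / 4 * m ^ 2 := by
    intro t y hy
    set c : Fin k → ES hM := fun j => b (Fin.castLE hkd j) with hc
    have hrange : Set.range c = b '' {i : Fin d | (i : ℕ) < k} :=
      (image_lt_eq_range hM b hkd).symm
    have hx' : t • pv + y ∈ Submodule.span ℝ (Set.range c) := by
      rw [hrange]
      exact Submodule.add_mem _ (Submodule.smul_mem _ _ hpvF) hy
    obtain ⟨l, hlmem, hlbound⟩ := babai k c (t • pv + y) hx'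
    have hlS : l ∈ S := by rw [hS, SbI, ← hrange]; exact hlmem
    have hsum : (∑ j : Fin k, ‖c j‖ ^ 2) ≤ 3 * m ^ 2 := by
      have h1 : ∀ j : Fin k, ‖c j‖ ^ 2 ≤ m ^ 2 := by
        intro j
        have h := hble (Fin.castLE hkd j) (by simpa using j.2)
        nlinarith [norm_nonneg (c j)]
      have hk3 : (k : ℝ) ≤ 3 := by exact_mod_cast (by omega : k ≤ 3)
      calc ∑ j : Fin k, ‖c j‖ ^ 2 ≤ ∑ _j : Fin k, m ^ 2 :=
            Finset.sum_le_sum (fun j _ => h1 j)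
      _ = (k : ℝ) * m ^ 2 := by rw [Finset.sum_const]; simp [mul_comm]
      _ ≤ 3 * m ^ 2 := by nlinarith
    refine ⟨l, hlS, ?_⟩
    have hlF : l ∈ F := hSF l hlS
    have hdecomp : t • v₀ + y - l = t • vp + (t • pv + y - l) := by
      rw [hvp]; module
    have hinF : t • pv + y - l ∈ F :=
      Submodule.sub_mem _ (Submodule.add_mem _ (Submodule.smul_mem _ _ hpvF) hy) hlF
    have hiz : (inner ℝ (t • vp) (t • pv + y - l) : ℝ) = 0 := by
      rw [real_inner_smul_left]
      have h0 := Submodule.inner_right_of_mem_orthogonal hinF hvporth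
      rw [real_inner_comm] at h0
      rw [h0]; ring
    have hns : ‖t • v₀ + y - l‖ ^ 2 = ‖t • vp‖ ^ 2 + ‖t • pv + y - l‖ ^ 2 := by
      rw [hdecomp, norm_add_sq_real, hiz]; ring
    have hvpb : ‖vp‖ ^ 2 ≤ m ^ 2 := by
      have h2 : (inner ℝ pv vp : ℝ) = 0 :=
        Submodule.inner_right_of_mem_orthogonal hpvF hvporth
      have h3 : m ^ 2 = ‖pv‖ ^ 2 + ‖vp‖ ^ 2 := by
        have hdecv : v₀ = pv + vp := by rw [hvp]; abel
        calc m ^ 2 = ‖pv + vp‖ ^ 2 := by rw [hm, hdecv]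
        _ = ‖pv‖ ^ 2 + 2 * (inner ℝ pv vp : ℝ) + ‖vp‖ ^ 2 := norm_add_sq_real _ _
        _ = ‖pv‖ ^ 2 + ‖vp‖ ^ 2 := by rw [h2]; ring
      nlinarith [sq_nonneg ‖pv‖]
    have hts : ‖t • vp‖ ^ 2 ≤ t ^ 2 * m ^ 2 := by
      rw [norm_smul, mul_pow, Real.norm_eq_abs, sq_abs]
      nlinarith [sq_nonneg t]
    linarith
  -- candidate set and minimal positive functional value
  set Cand := {z : ES hM | z ∈ T ∧ ‖z‖ ≤ 2 * m ∧ 0 < g z} with hCand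
  have hCandFin : Cand.Finite :=
    (Lat_inter_finite hM (2 * m)).subset (fun z hz => ⟨hTL hz.1, hz.2.1⟩)
  have hv₀Cand : v₀ ∈ Cand := by
    refine ⟨hv₀T, by rw [← hm]; nlinarith, by rw [gv₀]; norm_num⟩
  obtain ⟨w, hw, hwmin⟩ := hCandFin.toFinset.exists_min_image g
    ⟨v₀, (Set.Finite.mem_toFinset _).2 hv₀Cand⟩
  rw [Set.Finite.mem_toFinset] at hw
  have hwmin' : ∀ z ∈ Cand, g w ≤ g z := by
    intro z hz
    exact hwmin z ((Set.Finite.mem_toFinset _).2 hz)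
  set q := g w with hq
  have hq0 : 0 < q := hw.2.2
  have hq1 : q ≤ 1 := by
    have := hwmin' v₀ hv₀Cand
    rw [gv₀] at this
    exact this
  have hwT : w ∈ T := hw.1
  -- every value of g on T is an integer multiple of q
  have claimB : ∀ z, z ∈ T → ∃ n : ℤ, g z = n * q := by
    intro z hz
    set n : ℤ := ⌊g z / q⌋ with hn
    set r : ℝ := g z - n * q with hr
    have hr0 : 0 ≤ r := by
      have h1 : (n : ℝ) ≤ g z / q := Int.floor_le _
      have h2 : (n : ℝ) * q ≤ g z := by
        rw [← div_mul_cancel₀ (g z) (ne_of_gt hq0)]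
        exact mul_le_mul_of_nonneg_right h1 hq0.le
      rw [hr]; linarith
    have hrq : r < q := by
      have h1 : g z / q < n + 1 := Int.lt_floor_add_one _
      have h2 : g z < (n + 1) * q := by
        rw [← div_mul_cancel₀ (g z) (ne_of_gt hq0)]
        exact mul_lt_mul_of_pos_right h1 hq0
      rw [hr]; nlinarith
    rcases eq_or_lt_of_le hr0 with heq | hlt
    · exact ⟨n, by rw [hr] at heq; linarith⟩
    · exfalso
      set z' := z - n • w with hz'
      have hz'T : z' ∈ T := Submodule.sub_mem _ hz (Submodule.smul_mem _ _ hwT)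
      have hgz' : g z' = r := by
        rw [hz', g_sub, g_smulZ, hr, hq]
      have hyF : z' - g z' • v₀ ∈ F := hdec z' (hTFV z' hz'T)
      obtain ⟨l, hlS, hlb⟩ := reduce r (z' - g z' • v₀) hyF
      have hzeq : r • v₀ + (z' - g z' • v₀) = z' := by
        rw [hgz']; abel
      rw [hzeq] at hlb
      set z'' := z' - l with hz''
      have hz''T : z'' ∈ T := Submodule.sub_mem _ hz'T (hST hlS)
      have hgz'' : g z'' = r := by
        rw [hz'', g_sub, gF l (hSF l hlS), hgz']; ring
      have hnz'' : ‖z''‖ ≤ 2 * m := by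
        have h1 : r ≤ 1 := le_trans hrq.le hq1
        have hr2 : r ^ 2 ≤ 1 := by nlinarith [hlt, h1]
        have h6 : r ^ 2 * m ^ 2 ≤ 1 * m ^ 2 :=
          mul_le_mul_of_nonneg_right hr2 (sq_nonneg m)
        have h2 : ‖z''‖ ^ 2 ≤ 4 * m ^ 2 := by
          calc ‖z''‖ ^ 2 ≤ r ^ 2 * m ^ 2 + 3 / 4 * m ^ 2 := hlb
          _ ≤ 4 * m ^ 2 := by
            clear_value m r
            nlinarith [h6, sq_nonneg m]
        have h4 : (2 * m) ^ 2 = 4 * m ^ 2 := by ring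
        exact le_of_sq_le_sq' (by rw [h4]; exact h2) (norm_nonneg _) (by nlinarith)
      have : z'' ∈ Cand := ⟨hz''T, hnz'', by rw [hgz'']; exact hlt⟩
      have := hwmin' z'' this
      rw [hgz''] at this
      linarith
  -- choose the new basis vector
  obtain ⟨n₀, hn₀⟩ := claimB v₀ hv₀T
  rw [gv₀] at hn₀
  have hn₀1 : 1 ≤ n₀ := by
    by_contra hcon
    push_neg at hcon
    have : (n₀ : ℝ) ≤ 0 := by exact_mod_cast (by omega : n₀ ≤ 0)
    nlinarith
  have hchoice : ∃ v, v ∈ T ∧ v ∉ S ∧ ‖v‖ = m ∧ g v = q := by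
    rcases eq_or_lt_of_le hn₀1 with h1 | h2
    · -- n₀ = 1, q = 1, take v₀
      have hq1' : q = 1 := by
        rw [← h1] at hn₀; simpa using hn₀.symm
      exact ⟨v₀, hv₀T, hv₀S, rfl, by rw [gv₀, hq1']⟩
    · -- n₀ ≥ 2
      have hn₀2 : (2 : ℝ) ≤ n₀ := by exact_mod_cast h2
      have hq12 : q ≤ 1 / 2 := by nlinarith
      have hywF : w - g w • v₀ ∈ F := hdec w (hTFV w hwT)
      obtain ⟨l, hlS, hlb⟩ := reduce q (w - g w • v₀) hywF
      have hweq : q • v₀ + (w - g w • v₀) = w := by rw [hq]; abel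
      rw [hweq] at hlb
      set v := w - l with hv
      have hvT : v ∈ T := Submodule.sub_mem _ hwT (hST hlS)
      have hgv : g v = q := by
        rw [hv, g_sub, gF l (hSF l hlS), hq]; ring
      have hvS : v ∉ S := by
        intro hmem'
        have := gF v (hSF v hmem')
        rw [hgv] at this
        exact (ne_of_gt hq0) this
      have hvm : m ≤ ‖v‖ := hv₀min v (hTL hvT) hvS
      have hq2 : q ^ 2 ≤ 1 / 4 := by nlinarith
      have hvm2 : ‖v‖ ^ 2 ≤ m ^ 2 := by
        have h5 : q ^ 2 * m ^ 2 ≤ 1 / 4 * m ^ 2 :=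
          mul_le_mul_of_nonneg_right hq2 (sq_nonneg m)
        linarith
      have : ‖v‖ = m :=
        le_antisymm (le_of_sq_le_sq' hvm2 (norm_nonneg _) hm0.le) hvm
      exact ⟨v, hvT, hvS, this, hgv⟩
  obtain ⟨v, hvT, hvS, hvnorm, hgv⟩ := hchoice
  have hvL : v ∈ LatM hM := hTL hvT
  have hvFV : v ∈ FV := hTFV v hvT
  have hvF : v ∉ F := by
    intro hmem'
    have := gF v hmem'
    rw [hgv] at this
    exact (ne_of_gt hq0) this
  -- the new family
  set ik : Fin d := ⟨k, hk⟩ with hik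
  set b' := Function.update b ik v with hb'
  have hbb' : ∀ i : Fin d, (i : ℕ) < k → b' i = b i := by
    intro i hi
    rw [hb']
    have hne : i ≠ ik := by
      intro hc
      rw [hc, hik] at hi
      exact lt_irrefl k (by simpa using hi)
    exact Function.update_of_ne hne _ _
  have hb'k : b' ik = v := by rw [hb']; exact Function.update_self _ _ _
  have himg : ∀ j : ℕ, j ≤ k → b' '' {i : Fin d | (i : ℕ) < j} = b '' {i : Fin d | (i : ℕ) < j} := by
    intro j hj
    refine Set.image_congr ?_
    intro i hi
    exact hbb' i (lt_of_lt_of_le hi hj)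
  have hSb' : ∀ j : ℕ, j ≤ k → SbI hM b' j = SbI hM b j := by
    intro j hj; rw [SbI, SbI, himg j hj]
  have hFr' : ∀ j : ℕ, j ≤ k → FrR hM b' j = FrR hM b j := by
    intro j hj; rw [FrR, FrR, himg j hj]
  have himgS : b' '' {i : Fin d | (i : ℕ) < k + 1} = insert v (b '' {i : Fin d | (i : ℕ) < k}) := by
    ext x
    constructor
    · rintro ⟨i, hi, rfl⟩
      simp only [Set.mem_setOf_eq] at hi
      by_cases hik' : (i : ℕ) < k
      · exact Set.mem_insert_of_mem _ ⟨i, hik', (hbb' i hik').symm ▸ rfl⟩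
      · have : i = ik := Fin.ext (by simp [hik]; omega)
        rw [this, hb'k]
        exact Set.mem_insert _ _
    · rintro (rfl | ⟨i, hi, rfl⟩)
      · exact ⟨ik, by simp [hik], hb'k⟩
      · simp only [Set.mem_setOf_eq] at hi
        exact ⟨i, by simp; omega, hbb' i hi⟩
  have hSsucc : SbI hM b' (k + 1) = Submodule.span ℤ {v} ⊔ S := by
    rw [SbI, himgS, Submodule.span_insert, hS, SbI]
  have hFsucc : FrR hM b' (k + 1) = Submodule.span ℝ {v} ⊔ F := by
    rw [FrR, himgS, Submodule.span_insert, hF, FrR]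
  refine ⟨b', ?_, ?_, ?_, ?_⟩
  · -- membership
    intro i hi
    by_cases hik' : (i : ℕ) < k
    · rw [hbb' i hik']; exact hmem i hik'
    · have : i = ik := Fin.ext (by simp [hik]; omega)
      rw [this, hb'k]; exact hvL
  · -- not in earlier real span
    intro i hi
    by_cases hik' : (i : ℕ) < k
    · rw [hbb' i hik', hFr' (i : ℕ) hik'.le]
      exact hnotin i hik'
    · have hieq : i = ik := Fin.ext (by simp [hik]; omega)
      rw [hieq, hb'k]
      have : FrR hM b' (ik : ℕ) = F := by
        rw [show ((ik : Fin d) : ℕ) = k by simp [hik]]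
        exact hFr' k le_rfl
      rw [this]
      exact hvF
  · -- greedy
    intro i hi z hzL hzS
    by_cases hik' : (i : ℕ) < k
    · rw [hbb' i hik']
      rw [hSb' (i : ℕ) hik'.le] at hzS
      exact hgreedy i hik' z hzL hzS
    · have hieq : i = ik := Fin.ext (by simp [hik]; omega)
      rw [hieq, hb'k, hvnorm]
      rw [hieq, show ((ik : Fin d) : ℕ) = k by simp [hik], hSb' k le_rfl] at hzS
      exact hv₀min z hzL hzS
  · -- primitivity
    intro z hzL hzF
    rw [hFsucc] at hzF
    have hzFV : z ∈ FV := by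
      refine (sup_le (Submodule.span_le.2 ?_) le_sup_left : Submodule.span ℝ {v} ⊔ F ≤ FV) hzF
      intro x hx
      rw [Set.mem_singleton_iff] at hx
      rw [hx]
      exact hvFV
    have hzT : z ∈ T := Submodule.mem_inf.2 ⟨hzL, hzFV⟩
    obtain ⟨n, hn⟩ := claimB z hzT
    set z2 := z - n • v with hz2
    have hz2T : z2 ∈ T := Submodule.sub_mem _ hzT (Submodule.smul_mem _ _ hvT)
    have hgz2 : g z2 = 0 := by
      rw [hz2, g_sub, g_smulZ, hgv, hn]; ring
    have hz2F : z2 ∈ F := by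
      have := hdec z2 (hTFV z2 hz2T)
      rw [hgz2, zero_smul, sub_zero] at this
      exact this
    have hz2S : z2 ∈ S := hprim z2 (hTL hz2T) hz2F
    have : z = z2 + n • v := by rw [hz2]; abel
    rw [this, hSsucc]
    exact Submodule.add_mem _ (Submodule.mem_sup_right hz2S)
      (Submodule.mem_sup_left (Submodule.smul_mem _ _ (Submodule.mem_span_singleton_self v)))
lemma good_exists (hd4 : d ≤ 4) : ∀ k, k ≤ d → ∃ b, GoodP hM k b := by
  intro k
  induction k with
  | zero => intro _; exact ⟨fun _ => 0, good_zero hM⟩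
  | succ n IH => intro h; exact good_step hM hd4 (by omega) (IH (by omega))

lemma sum_smul_bES (c : Fin d → ℤ) :
    (∑ j, c j • bES hM j) = (show ES hM from fun l => (c l : ℝ)) := by
  show (∑ j, c j • (Pi.basisFun ℝ (Fin d) j) : Fin d → ℝ) = fun l => (c l : ℝ)
  funext l
  rw [Finset.sum_apply]
  simp [Pi.basisFun_apply, Pi.single_apply]

end ESsection

/-- Theorem `thRed` (existence part): for `1 ≤ d ≤ 4` and any symmetric positive
definite matrix `M`, there exists an `M`-reduced basis of `ℤ^d`. -/

theorem stmt1 {d : ℕ} (hd1 : 1 ≤ d) (hd4 : d ≤ 4)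
    (M : Matrix (Fin d) (Fin d) ℝ) (hM : M.PosDef) :
    ∃ u : Fin d → Fin d → ℝ, IsReducedBasis M u := by
  classical
  obtain ⟨b, hmem, hnotin, hgreedy, hprim⟩ := good_exists hM hd4 d le_rfl
  have hNE : Nonempty (Fin d) := ⟨⟨0, by omega⟩⟩
  -- linear independence of b over ℝ
  have key : ∀ k (hk : k ≤ d), LinearIndependent ℝ (fun j : Fin k => b (Fin.castLE hk j)) := by
    intro k
    induction k with
    | zero => intro hk; exact linearIndependent_empty_type
    | succ n IH =>
      intro hk
      have hn : n ≤ d := by omega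
      have hnd : n < d := by omega
      have heq : (fun j : Fin (n+1) => b (Fin.castLE hk j))
          = Fin.snoc (fun j : Fin n => b (Fin.castLE hn j)) (b ⟨n, hnd⟩) := by
        funext j
        induction j using Fin.lastCases with
        | last =>
          have hc : Fin.castLE hk (Fin.last n) = ⟨n, hnd⟩ := Fin.ext rfl
          rw [Fin.snoc_last, hc]
        | cast i =>
          have hc : Fin.castLE hk i.castSucc = Fin.castLE hn i := Fin.ext rfl
          rw [Fin.snoc_castSucc, hc]
      rw [heq, linearIndependent_fin_snoc]
      refine ⟨IH hn, ?_⟩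
      have hr : Set.range (fun j : Fin n => b (Fin.castLE hn j))
          = b '' {i : Fin d | (i : ℕ) < n} := (image_lt_eq_range hM b hn).symm
      rw [hr]
      exact hnotin ⟨n, hnd⟩ hnd
  have hindep : LinearIndependent ℝ b := key d le_rfl
  have huniv : {i : Fin d | (i : ℕ) < d} = Set.univ := by
    ext i; simpa using i.2
  have hspan_top : FrR hM b d = ⊤ := by
    rw [FrR, huniv, Set.image_univ]
    exact hindep.span_eq_top_of_card_eq_finrank (by simp [finrank_ES])
  have hLat_eq : SbI hM b d = LatM hM := by
    refine le_antisymm ?_ ?_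
    · rw [SbI]
      refine Submodule.span_le.2 ?_
      rintro x ⟨i, hi, rfl⟩
      exact hmem i hi
    · intro z hz
      exact hprim z hz (by rw [hspan_top]; trivial)
  -- coordinates
  have hbL : ∀ i, b i ∈ LatM hM := fun i => hmem i i.2
  choose C hC using fun i => (Submodule.mem_span_range_iff_exists_fun ℤ).1 (hbL i)
  have heS' : ∀ j, bES hM j ∈ Submodule.span ℤ (Set.range b) := by
    intro j
    have h1 : bES hM j ∈ SbI hM b d := by
      rw [hLat_eq]
      exact Submodule.subset_span ⟨j, rfl⟩
    rwa [SbI, huniv, Set.image_univ] at h1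
  choose D hD using fun j => (Submodule.mem_span_range_iff_exists_fun ℤ).1 (heS' j)
  -- uniqueness of integer coordinates w.r.t. b
  have hbu : ∀ i, b i = (show ES hM from fun l => ((C i l : ℝ))) := by
    intro i
    rw [← hC i, sum_smul_bES]
  have huniq : ∀ (c : Fin d → ℤ), (∑ l, c l • b l) = 0 → ∀ l, c l = 0 := by
    intro c hc l
    have h0 : (∑ l, ((c l : ℝ)) • b l) = 0 := by
      rw [← hc]
      exact Finset.sum_congr rfl (fun l _ => Int.cast_smul_eq_zsmul ℝ _ _)
    have := Fintype.linearIndependent_iff.1 hindep (fun l => (c l : ℝ)) h0 l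
    exact_mod_cast this
  have hCD : ∀ i l, (∑ j, C i j * D j l) = if i = l then (1 : ℤ) else 0 := by
    intro i l
    have hsum : (∑ l, (∑ j, C i j * D j l) • b l) = b i := by
      calc ∑ l, (∑ j, C i j * D j l) • b l
          = ∑ l, ∑ j, (C i j * D j l) • b l := by
            refine Finset.sum_congr rfl (fun l _ => ?_); rw [Finset.sum_smul]
      _ = ∑ j, ∑ l, (C i j * D j l) • b l := Finset.sum_comm
      _ = ∑ j, C i j • (∑ l, D j l • b l) := by
            refine Finset.sum_congr rfl (fun j _ => ?_)
            rw [Finset.smul_sum]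
            exact Finset.sum_congr rfl (fun l _ => (smul_smul _ _ _).symm)
      _ = ∑ j, C i j • bES hM j := by
            exact Finset.sum_congr rfl (fun j _ => by rw [hD j])
      _ = b i := hC i
    have hdelta : (∑ l, (if i = l then (1:ℤ) else 0) • b l) = b i := by
      simp
    have h0 : (∑ l, ((∑ j, C i j * D j l) - (if i = l then (1:ℤ) else 0)) • b l) = 0 := by
      simp only [sub_smul, Finset.sum_sub_distrib, hsum, hdelta, sub_self]
    have := huniq _ h0 l
    omega
  -- determinant
  set Cm : Matrix (Fin d) (Fin d) ℤ := Matrix.of C with hCm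
  set Dm : Matrix (Fin d) (Fin d) ℤ := Matrix.of D with hDm
  have hmul : Cm * Dm = 1 := by
    ext i l
    rw [Matrix.mul_apply, Matrix.one_apply]
    exact hCD i l
  have hdet : Cm.det * Dm.det = 1 := by
    have := congrArg Matrix.det hmul
    rwa [Matrix.det_mul, Matrix.det_one] at this
  have hdet1 : Cm.det = 1 ∨ Cm.det = -1 :=
    Int.isUnit_iff.1 (IsUnit.of_mul_eq_one _ hdet)
  -- the answer
  refine ⟨fun i l => (C i l : ℝ), ⟨?_, ?_, ?_⟩⟩
  · intro i l
    exact ⟨C i l, rfl⟩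
  · have hof : (Matrix.of fun i l => ((C i l : ℝ))) = Cm.map (Int.castRingHom ℝ) := by
      ext i l; rfl
    have h9 : ((Cm.det : ℝ)) = (Cm.map ⇑(Int.castRingHom ℝ)).det :=
      RingHom.map_det (Int.castRingHom ℝ) Cm
    rw [hof, ← h9]
    rcases hdet1 with h | h <;> rw [h] <;> norm_num
  · intro k z hz hnin
    have hzL : (show ES hM from z) ∈ LatM hM := (mem_Lat_iff hM z).2 hz
    have hzS : (show ES hM from z) ∉ SbI hM b (k : ℕ) := by
      intro hmem'
      apply hnin
      rw [SbI] at hmem'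
      obtain ⟨c, hc0, hceq⟩ := (mem_span_image_iff_coeff b _ _).1 hmem'
      refine ⟨c, fun i hi => hc0 i (by simpa using hi), ?_⟩
      have h2 : (show ES hM from z) = ∑ i, (c i : ℝ) • b i := by
        rw [hceq]
        exact Finset.sum_congr rfl (fun i _ => (Int.cast_smul_eq_zsmul ℝ _ _).symm)
      have h3 : (show ES hM from z)
          = ∑ i, (c i : ℝ) • (show ES hM from fun l => ((C i l : ℝ))) := by
        rw [h2]
        exact Finset.sum_congr rfl (fun i _ => by rw [hbu i])
      exact h3
    have hle := hgreedy k k.2 _ hzL hzS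
    have hbk : ‖b k‖ = normM M (fun l => ((C k l : ℝ))) := by
      rw [hbu k]; exact norm_ES hM _
    have hzn : ‖(show ES hM from z)‖ = normM M z := norm_ES hM _
    rw [hbk, hzn] at hle
    exact hle

end AuxReducedBasis

end
end

section
/- Let M ∈ S_2^+ and let (u_1,u_2) be an M-reduced basis of ℤ². Let u := u_1 and v := ε·u_2, where ε ∈ {−1,1} is chosen so that uᵀ M v ≥ 0. Then the collection 𝒯 of the six triangles having 0 as a vertex together with one of the pairs {u,v}, {v,v−u}, {v−u,−u}, {−u,−v}, {−v,u−v}, {u−v,u} is an M-reduced mesh. -/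
open Matrix
open scoped BigOperators ENNReal Classical

noncomputable section

namespace Stmt6Aux

abbrev E2 := Fin 2 → ℝ

lemma eq_iff_coords {p q : E2} : p = q ↔ p 0 = q 0 ∧ p 1 = q 1 := by
  constructor
  · rintro rfl; exact ⟨rfl, rfl⟩
  · rintro ⟨h0, h1⟩; funext i; fin_cases i <;> assumption

lemma mem_triangle_iff (a b : E2) (p : E2) :
    p ∈ convexHull ℝ ({0, a, b} : Set E2) ↔
      ∃ s t : ℝ, 0 ≤ s ∧ 0 ≤ t ∧ s + t ≤ 1 ∧ p = s • a + t • b := by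
  rw [show ({0, a, b} : Set E2) = insert 0 {a, b} from rfl,
    convexHull_insert ⟨a, by simp⟩, convexHull_pair]
  rw [mem_convexJoin]
  constructor
  · rintro ⟨x, hx, z, hz, hp⟩
    rw [Set.mem_singleton_iff] at hx; subst hx
    obtain ⟨c, d, hc, hd, hcd, rfl⟩ := hp
    obtain ⟨s', t', hs', ht', hst', rfl⟩ := hz
    refine ⟨d * s', d * t', by positivity, by positivity, by nlinarith, ?_⟩
    simp only [smul_zero, zero_add, smul_add, smul_smul]
  · rintro ⟨s, t, hs, ht, hst, rfl⟩
    rcases eq_or_lt_of_le (by linarith : (0:ℝ) ≤ s + t) with h | h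
    · refine ⟨0, rfl, a, left_mem_segment ℝ a b, 1, 0, by norm_num, by norm_num, by norm_num, ?_⟩
      have hs0 : s = 0 := by linarith
      have ht0 : t = 0 := by linarith
      simp [hs0, ht0]
    · refine ⟨0, rfl, (s/(s+t)) • a + (t/(s+t)) • b,
        ⟨s/(s+t), t/(s+t), by positivity, by positivity, by field_simp, rfl⟩,
        1 - (s+t), s + t, by linarith, by linarith, by ring, ?_⟩
      rw [smul_zero, zero_add, smul_add, smul_smul, smul_smul]
      rw [mul_div_cancel₀ _ (ne_of_gt h), mul_div_cancel₀ _ (ne_of_gt h)]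

lemma mem_seg_iff (w p : E2) :
    p ∈ convexHull ℝ ({0, w} : Set E2) ↔ ∃ t : ℝ, 0 ≤ t ∧ t ≤ 1 ∧ p = t • w := by
  rw [convexHull_pair]
  constructor
  · rintro ⟨c, d, hc, hd, hcd, rfl⟩
    exact ⟨d, hd, by linarith, by simp⟩
  · rintro ⟨t, ht0, ht1, rfl⟩
    exact ⟨1 - t, t, by linarith, ht0, by ring, by simp⟩

lemma memT0 (p : E2) : p ∈ convexHull ℝ (({0, ![1,0], ![0,1]} : Set E2)) ↔
    (0 ≤ p 0) ∧ (0 ≤ p 1) ∧ (p 0 + p 1 ≤ 1) := by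
  rw [mem_triangle_iff]
  constructor
  · rintro ⟨s, t, hs, ht, hst, rfl⟩
    refine ⟨?_, ?_, ?_⟩ <;>
      · simp only [Pi.add_apply, Pi.smul_apply, smul_eq_mul, Matrix.cons_val_zero, Matrix.cons_val_one, Matrix.head_cons]
        norm_num
        all_goals linarith
  · rintro ⟨h1, h2, h3⟩
    refine ⟨p 0, p 1, by linarith, by linarith, by linarith, ?_⟩
    rw [eq_iff_coords]
    constructor <;>
      · simp only [Pi.add_apply, Pi.smul_apply, smul_eq_mul, Matrix.cons_val_zero, Matrix.cons_val_one, Matrix.head_cons]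
        norm_num
        all_goals ring

lemma memT1 (p : E2) : p ∈ convexHull ℝ (({0, ![0,1], ![-1,1]} : Set E2)) ↔
    (p 0 ≤ 0) ∧ (0 ≤ p 0 + p 1) ∧ (p 1 ≤ 1) := by
  rw [mem_triangle_iff]
  constructor
  · rintro ⟨s, t, hs, ht, hst, rfl⟩
    refine ⟨?_, ?_, ?_⟩ <;>
      · simp only [Pi.add_apply, Pi.smul_apply, smul_eq_mul, Matrix.cons_val_zero, Matrix.cons_val_one, Matrix.head_cons]
        norm_num
        all_goals linarith
  · rintro ⟨h1, h2, h3⟩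
    refine ⟨p 0 + p 1, -(p 0), by linarith, by linarith, by linarith, ?_⟩
    rw [eq_iff_coords]
    constructor <;>
      · simp only [Pi.add_apply, Pi.smul_apply, smul_eq_mul, Matrix.cons_val_zero, Matrix.cons_val_one, Matrix.head_cons]
        norm_num
        all_goals ring

lemma memT2 (p : E2) : p ∈ convexHull ℝ (({0, ![-1,1], ![-1,0]} : Set E2)) ↔
    (0 ≤ p 1) ∧ (p 0 + p 1 ≤ 0) ∧ (-1 ≤ p 0) := by
  rw [mem_triangle_iff]
  constructor
  · rintro ⟨s, t, hs, ht, hst, rfl⟩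
    refine ⟨?_, ?_, ?_⟩ <;>
      · simp only [Pi.add_apply, Pi.smul_apply, smul_eq_mul, Matrix.cons_val_zero, Matrix.cons_val_one, Matrix.head_cons]
        norm_num
        all_goals linarith
  · rintro ⟨h1, h2, h3⟩
    refine ⟨p 1, -(p 0) - p 1, by linarith, by linarith, by linarith, ?_⟩
    rw [eq_iff_coords]
    constructor <;>
      · simp only [Pi.add_apply, Pi.smul_apply, smul_eq_mul, Matrix.cons_val_zero, Matrix.cons_val_one, Matrix.head_cons]
        norm_num
        all_goals ring

lemma memT3 (p : E2) : p ∈ convexHull ℝ (({0, ![-1,0], ![0,-1]} : Set E2)) ↔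
    (p 0 ≤ 0) ∧ (p 1 ≤ 0) ∧ (-1 ≤ p 0 + p 1) := by
  rw [mem_triangle_iff]
  constructor
  · rintro ⟨s, t, hs, ht, hst, rfl⟩
    refine ⟨?_, ?_, ?_⟩ <;>
      · simp only [Pi.add_apply, Pi.smul_apply, smul_eq_mul, Matrix.cons_val_zero, Matrix.cons_val_one, Matrix.head_cons]
        norm_num
        all_goals linarith
  · rintro ⟨h1, h2, h3⟩
    refine ⟨-(p 0), -(p 1), by linarith, by linarith, by linarith, ?_⟩
    rw [eq_iff_coords]
    constructor <;>
      · simp only [Pi.add_apply, Pi.smul_apply, smul_eq_mul, Matrix.cons_val_zero, Matrix.cons_val_one, Matrix.head_cons]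
        norm_num
        all_goals ring

lemma memT4 (p : E2) : p ∈ convexHull ℝ (({0, ![0,-1], ![1,-1]} : Set E2)) ↔
    (0 ≤ p 0) ∧ (p 0 + p 1 ≤ 0) ∧ (-1 ≤ p 1) := by
  rw [mem_triangle_iff]
  constructor
  · rintro ⟨s, t, hs, ht, hst, rfl⟩
    refine ⟨?_, ?_, ?_⟩ <;>
      · simp only [Pi.add_apply, Pi.smul_apply, smul_eq_mul, Matrix.cons_val_zero, Matrix.cons_val_one, Matrix.head_cons]
        norm_num
        all_goals linarith
  · rintro ⟨h1, h2, h3⟩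
    refine ⟨-(p 0) - p 1, p 0, by linarith, by linarith, by linarith, ?_⟩
    rw [eq_iff_coords]
    constructor <;>
      · simp only [Pi.add_apply, Pi.smul_apply, smul_eq_mul, Matrix.cons_val_zero, Matrix.cons_val_one, Matrix.head_cons]
        norm_num
        all_goals ring

lemma memT5 (p : E2) : p ∈ convexHull ℝ (({0, ![1,-1], ![1,0]} : Set E2)) ↔
    (p 1 ≤ 0) ∧ (0 ≤ p 0 + p 1) ∧ (p 0 ≤ 1) := by
  rw [mem_triangle_iff]
  constructor
  · rintro ⟨s, t, hs, ht, hst, rfl⟩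
    refine ⟨?_, ?_, ?_⟩ <;>
      · simp only [Pi.add_apply, Pi.smul_apply, smul_eq_mul, Matrix.cons_val_zero, Matrix.cons_val_one, Matrix.head_cons]
        norm_num
        all_goals linarith
  · rintro ⟨h1, h2, h3⟩
    refine ⟨-(p 1), p 0 + p 1, by linarith, by linarith, by linarith, ?_⟩
    rw [eq_iff_coords]
    constructor <;>
      · simp only [Pi.add_apply, Pi.smul_apply, smul_eq_mul, Matrix.cons_val_zero, Matrix.cons_val_one, Matrix.head_cons]
        norm_num
        all_goals ring

lemma memS0 (p : E2) : p ∈ convexHull ℝ (({0, ![1,0]} : Set E2)) ↔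
    (p 1 = 0) ∧ (0 ≤ p 0) ∧ (p 0 ≤ 1) := by
  rw [mem_seg_iff]
  constructor
  · rintro ⟨t, ht0, ht1, rfl⟩
    refine ⟨?_, ?_, ?_⟩ <;>
      · simp only [Pi.add_apply, Pi.smul_apply, smul_eq_mul, Matrix.cons_val_zero, Matrix.cons_val_one, Matrix.head_cons]
        norm_num
        all_goals linarith
  · rintro ⟨h1, h2, h3⟩
    refine ⟨p 0, by linarith, by linarith, ?_⟩
    rw [eq_iff_coords]
    constructor <;>
      · simp only [Pi.add_apply, Pi.smul_apply, smul_eq_mul, Matrix.cons_val_zero, Matrix.cons_val_one, Matrix.head_cons]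
        norm_num
        all_goals linarith

lemma memS1 (p : E2) : p ∈ convexHull ℝ (({0, ![0,1]} : Set E2)) ↔
    (p 0 = 0) ∧ (0 ≤ p 1) ∧ (p 1 ≤ 1) := by
  rw [mem_seg_iff]
  constructor
  · rintro ⟨t, ht0, ht1, rfl⟩
    refine ⟨?_, ?_, ?_⟩ <;>
      · simp only [Pi.add_apply, Pi.smul_apply, smul_eq_mul, Matrix.cons_val_zero, Matrix.cons_val_one, Matrix.head_cons]
        norm_num
        all_goals linarith
  · rintro ⟨h1, h2, h3⟩
    refine ⟨p 1, by linarith, by linarith, ?_⟩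
    rw [eq_iff_coords]
    constructor <;>
      · simp only [Pi.add_apply, Pi.smul_apply, smul_eq_mul, Matrix.cons_val_zero, Matrix.cons_val_one, Matrix.head_cons]
        norm_num
        all_goals linarith

lemma memS2 (p : E2) : p ∈ convexHull ℝ (({0, ![-1,1]} : Set E2)) ↔
    (p 0 + p 1 = 0) ∧ (0 ≤ p 1) ∧ (p 1 ≤ 1) := by
  rw [mem_seg_iff]
  constructor
  · rintro ⟨t, ht0, ht1, rfl⟩
    refine ⟨?_, ?_, ?_⟩ <;>
      · simp only [Pi.add_apply, Pi.smul_apply, smul_eq_mul, Matrix.cons_val_zero, Matrix.cons_val_one, Matrix.head_cons]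
        norm_num
        all_goals linarith
  · rintro ⟨h1, h2, h3⟩
    refine ⟨p 1, by linarith, by linarith, ?_⟩
    rw [eq_iff_coords]
    constructor <;>
      · simp only [Pi.add_apply, Pi.smul_apply, smul_eq_mul, Matrix.cons_val_zero, Matrix.cons_val_one, Matrix.head_cons]
        norm_num
        all_goals linarith

lemma memS3 (p : E2) : p ∈ convexHull ℝ (({0, ![-1,0]} : Set E2)) ↔
    (p 1 = 0) ∧ (-1 ≤ p 0) ∧ (p 0 ≤ 0) := by
  rw [mem_seg_iff]
  constructor
  · rintro ⟨t, ht0, ht1, rfl⟩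
    refine ⟨?_, ?_, ?_⟩ <;>
      · simp only [Pi.add_apply, Pi.smul_apply, smul_eq_mul, Matrix.cons_val_zero, Matrix.cons_val_one, Matrix.head_cons]
        norm_num
        all_goals linarith
  · rintro ⟨h1, h2, h3⟩
    refine ⟨-(p 0), by linarith, by linarith, ?_⟩
    rw [eq_iff_coords]
    constructor <;>
      · simp only [Pi.add_apply, Pi.smul_apply, smul_eq_mul, Matrix.cons_val_zero, Matrix.cons_val_one, Matrix.head_cons]
        norm_num
        all_goals linarith

lemma memS4 (p : E2) : p ∈ convexHull ℝ (({0, ![0,-1]} : Set E2)) ↔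
    (p 0 = 0) ∧ (-1 ≤ p 1) ∧ (p 1 ≤ 0) := by
  rw [mem_seg_iff]
  constructor
  · rintro ⟨t, ht0, ht1, rfl⟩
    refine ⟨?_, ?_, ?_⟩ <;>
      · simp only [Pi.add_apply, Pi.smul_apply, smul_eq_mul, Matrix.cons_val_zero, Matrix.cons_val_one, Matrix.head_cons]
        norm_num
        all_goals linarith
  · rintro ⟨h1, h2, h3⟩
    refine ⟨-(p 1), by linarith, by linarith, ?_⟩
    rw [eq_iff_coords]
    constructor <;>
      · simp only [Pi.add_apply, Pi.smul_apply, smul_eq_mul, Matrix.cons_val_zero, Matrix.cons_val_one, Matrix.head_cons]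
        norm_num
        all_goals linarith

lemma memS5 (p : E2) : p ∈ convexHull ℝ (({0, ![1,-1]} : Set E2)) ↔
    (p 0 + p 1 = 0) ∧ (0 ≤ p 0) ∧ (p 0 ≤ 1) := by
  rw [mem_seg_iff]
  constructor
  · rintro ⟨t, ht0, ht1, rfl⟩
    refine ⟨?_, ?_, ?_⟩ <;>
      · simp only [Pi.add_apply, Pi.smul_apply, smul_eq_mul, Matrix.cons_val_zero, Matrix.cons_val_one, Matrix.head_cons]
        norm_num
        all_goals linarith
  · rintro ⟨h1, h2, h3⟩
    refine ⟨p 0, by linarith, by linarith, ?_⟩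
    rw [eq_iff_coords]
    constructor <;>
      · simp only [Pi.add_apply, Pi.smul_apply, smul_eq_mul, Matrix.cons_val_zero, Matrix.cons_val_one, Matrix.head_cons]
        norm_num
        all_goals linarith

lemma mesh_helper {S T R : Finset E2} (hRS : R ⊆ S) (hRT : R ⊆ T)
    (h : convexHull ℝ (S : Set E2) ∩ convexHull ℝ (T : Set E2) ⊆ convexHull ℝ (R : Set E2)) :
    convexHull ℝ (S : Set E2) ∩ convexHull ℝ (T : Set E2)
      = convexHull ℝ ((S ∩ T : Finset E2) : Set E2) := by
  apply subset_antisymm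
  · refine h.trans (convexHull_mono ?_)
    exact_mod_cast Finset.subset_inter hRS hRT
  · apply Set.subset_inter
    · exact convexHull_mono (by rw [Finset.coe_inter]; exact Set.inter_subset_left)
    · exact convexHull_mono (by rw [Finset.coe_inter]; exact Set.inter_subset_right)

lemma isSimplex_tri {a b : E2} (h : a 0 * b 1 - a 1 * b 0 ≠ 0) :
    IsSimplex 2 ({0, a, b} : Finset E2) := by
  have h0a : (0:E2) ≠ a := by intro e; rw [← e] at h; simp at h
  have h0b : (0:E2) ≠ b := by intro e; rw [← e] at h; simp at h
  have hab : a ≠ b := by intro e; rw [e] at h; apply h; ring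
  constructor
  · rw [Finset.card_insert_of_notMem (by simp [h0a, h0b]),
      Finset.card_insert_of_notMem (by simp [hab]), Finset.card_singleton]
  · have ai3 : AffineIndependent ℝ ![(0:E2), a, b] := by
      rw [affineIndependent_iff_not_collinear_set]
      intro hc
      rw [collinear_iff_of_mem (Set.mem_insert _ _)] at hc
      obtain ⟨v, hv⟩ := hc
      obtain ⟨r, hr⟩ := hv a (by simp)
      obtain ⟨r', hr'⟩ := hv b (by simp)
      have ha0 : a 0 = r * v 0 := by rw [hr]; simp
      have ha1 : a 1 = r * v 1 := by rw [hr]; simp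
      have hb0 : b 0 = r' * v 0 := by rw [hr']; simp
      have hb1 : b 1 = r' * v 1 := by rw [hr']; simp
      apply h
      rw [ha0, ha1, hb0, hb1]; ring
    have := ai3.range
    have hr : Set.range ![(0:E2), a, b] = (({0, a, b} : Finset E2) : Set E2) := by
      simp only [Matrix.range_cons, Matrix.range_empty, Finset.coe_insert, Finset.coe_singleton]
      ext x; simp; tauto
    rw [hr] at this
    exact this

lemma inter01 : convexHull ℝ (({0, ![1,0], ![0,1]} : Finset E2) : Set E2) ∩ convexHull ℝ (({0, ![0,1], ![-1,1]} : Finset E2) : Set E2)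
    = convexHull ℝ ((({0, ![1,0], ![0,1]} : Finset E2) ∩ ({0, ![0,1], ![-1,1]} : Finset E2) : Finset E2) : Set E2) := by
  apply mesh_helper (R := ({0, ![0,1]} : Finset E2)) (by intro x hx; simp at hx ⊢; tauto) (by intro x hx; simp at hx ⊢; tauto)
  rintro p ⟨h1, h2⟩
  simp only [Finset.coe_insert, Finset.coe_singleton] at h1 h2 ⊢
  rw [memT0] at h1
  rw [memT1] at h2
  obtain ⟨a1, a2, a3⟩ := h1
  obtain ⟨b1, b2, b3⟩ := h2
  rw [memS1]
  exact ⟨by linarith, by linarith, by linarith⟩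

lemma inter12 : convexHull ℝ (({0, ![0,1], ![-1,1]} : Finset E2) : Set E2) ∩ convexHull ℝ (({0, ![-1,1], ![-1,0]} : Finset E2) : Set E2)
    = convexHull ℝ ((({0, ![0,1], ![-1,1]} : Finset E2) ∩ ({0, ![-1,1], ![-1,0]} : Finset E2) : Finset E2) : Set E2) := by
  apply mesh_helper (R := ({0, ![-1,1]} : Finset E2)) (by intro x hx; simp at hx ⊢; tauto) (by intro x hx; simp at hx ⊢; tauto)
  rintro p ⟨h1, h2⟩
  simp only [Finset.coe_insert, Finset.coe_singleton] at h1 h2 ⊢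
  rw [memT1] at h1
  rw [memT2] at h2
  obtain ⟨a1, a2, a3⟩ := h1
  obtain ⟨b1, b2, b3⟩ := h2
  rw [memS2]
  exact ⟨by linarith, by linarith, by linarith⟩

lemma inter23 : convexHull ℝ (({0, ![-1,1], ![-1,0]} : Finset E2) : Set E2) ∩ convexHull ℝ (({0, ![-1,0], ![0,-1]} : Finset E2) : Set E2)
    = convexHull ℝ ((({0, ![-1,1], ![-1,0]} : Finset E2) ∩ ({0, ![-1,0], ![0,-1]} : Finset E2) : Finset E2) : Set E2) := by
  apply mesh_helper (R := ({0, ![-1,0]} : Finset E2)) (by intro x hx; simp at hx ⊢; tauto) (by intro x hx; simp at hx ⊢; tauto)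
  rintro p ⟨h1, h2⟩
  simp only [Finset.coe_insert, Finset.coe_singleton] at h1 h2 ⊢
  rw [memT2] at h1
  rw [memT3] at h2
  obtain ⟨a1, a2, a3⟩ := h1
  obtain ⟨b1, b2, b3⟩ := h2
  rw [memS3]
  exact ⟨by linarith, by linarith, by linarith⟩

lemma inter34 : convexHull ℝ (({0, ![-1,0], ![0,-1]} : Finset E2) : Set E2) ∩ convexHull ℝ (({0, ![0,-1], ![1,-1]} : Finset E2) : Set E2)
    = convexHull ℝ ((({0, ![-1,0], ![0,-1]} : Finset E2) ∩ ({0, ![0,-1], ![1,-1]} : Finset E2) : Finset E2) : Set E2) := by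
  apply mesh_helper (R := ({0, ![0,-1]} : Finset E2)) (by intro x hx; simp at hx ⊢; tauto) (by intro x hx; simp at hx ⊢; tauto)
  rintro p ⟨h1, h2⟩
  simp only [Finset.coe_insert, Finset.coe_singleton] at h1 h2 ⊢
  rw [memT3] at h1
  rw [memT4] at h2
  obtain ⟨a1, a2, a3⟩ := h1
  obtain ⟨b1, b2, b3⟩ := h2
  rw [memS4]
  exact ⟨by linarith, by linarith, by linarith⟩

lemma inter45 : convexHull ℝ (({0, ![0,-1], ![1,-1]} : Finset E2) : Set E2) ∩ convexHull ℝ (({0, ![1,-1], ![1,0]} : Finset E2) : Set E2)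
    = convexHull ℝ ((({0, ![0,-1], ![1,-1]} : Finset E2) ∩ ({0, ![1,-1], ![1,0]} : Finset E2) : Finset E2) : Set E2) := by
  apply mesh_helper (R := ({0, ![1,-1]} : Finset E2)) (by intro x hx; simp at hx ⊢; tauto) (by intro x hx; simp at hx ⊢; tauto)
  rintro p ⟨h1, h2⟩
  simp only [Finset.coe_insert, Finset.coe_singleton] at h1 h2 ⊢
  rw [memT4] at h1
  rw [memT5] at h2
  obtain ⟨a1, a2, a3⟩ := h1
  obtain ⟨b1, b2, b3⟩ := h2
  rw [memS5]
  exact ⟨by linarith, by linarith, by linarith⟩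

lemma inter50 : convexHull ℝ (({0, ![1,-1], ![1,0]} : Finset E2) : Set E2) ∩ convexHull ℝ (({0, ![1,0], ![0,1]} : Finset E2) : Set E2)
    = convexHull ℝ ((({0, ![1,-1], ![1,0]} : Finset E2) ∩ ({0, ![1,0], ![0,1]} : Finset E2) : Finset E2) : Set E2) := by
  apply mesh_helper (R := ({0, ![1,0]} : Finset E2)) (by intro x hx; simp at hx ⊢; tauto) (by intro x hx; simp at hx ⊢; tauto)
  rintro p ⟨h1, h2⟩
  simp only [Finset.coe_insert, Finset.coe_singleton] at h1 h2 ⊢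
  rw [memT5] at h1
  rw [memT0] at h2
  obtain ⟨a1, a2, a3⟩ := h1
  obtain ⟨b1, b2, b3⟩ := h2
  rw [memS0]
  exact ⟨by linarith, by linarith, by linarith⟩

lemma inter02 : convexHull ℝ (({0, ![1,0], ![0,1]} : Finset E2) : Set E2) ∩ convexHull ℝ (({0, ![-1,1], ![-1,0]} : Finset E2) : Set E2)
    = convexHull ℝ ((({0, ![1,0], ![0,1]} : Finset E2) ∩ ({0, ![-1,1], ![-1,0]} : Finset E2) : Finset E2) : Set E2) := by
  apply mesh_helper (R := ({0} : Finset E2)) (by intro x hx; simp at hx ⊢; tauto) (by intro x hx; simp at hx ⊢; tauto)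
  rintro p ⟨h1, h2⟩
  simp only [Finset.coe_insert, Finset.coe_singleton] at h1 h2 ⊢
  rw [memT0] at h1
  rw [memT2] at h2
  obtain ⟨a1, a2, a3⟩ := h1
  obtain ⟨b1, b2, b3⟩ := h2
  rw [convexHull_singleton, Set.mem_singleton_iff, eq_iff_coords]
  simp only [Pi.zero_apply]
  exact ⟨by linarith, by linarith⟩

lemma inter13 : convexHull ℝ (({0, ![0,1], ![-1,1]} : Finset E2) : Set E2) ∩ convexHull ℝ (({0, ![-1,0], ![0,-1]} : Finset E2) : Set E2)
    = convexHull ℝ ((({0, ![0,1], ![-1,1]} : Finset E2) ∩ ({0, ![-1,0], ![0,-1]} : Finset E2) : Finset E2) : Set E2) := by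
  apply mesh_helper (R := ({0} : Finset E2)) (by intro x hx; simp at hx ⊢; tauto) (by intro x hx; simp at hx ⊢; tauto)
  rintro p ⟨h1, h2⟩
  simp only [Finset.coe_insert, Finset.coe_singleton] at h1 h2 ⊢
  rw [memT1] at h1
  rw [memT3] at h2
  obtain ⟨a1, a2, a3⟩ := h1
  obtain ⟨b1, b2, b3⟩ := h2
  rw [convexHull_singleton, Set.mem_singleton_iff, eq_iff_coords]
  simp only [Pi.zero_apply]
  exact ⟨by linarith, by linarith⟩

lemma inter24 : convexHull ℝ (({0, ![-1,1], ![-1,0]} : Finset E2) : Set E2) ∩ convexHull ℝ (({0, ![0,-1], ![1,-1]} : Finset E2) : Set E2)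
    = convexHull ℝ ((({0, ![-1,1], ![-1,0]} : Finset E2) ∩ ({0, ![0,-1], ![1,-1]} : Finset E2) : Finset E2) : Set E2) := by
  apply mesh_helper (R := ({0} : Finset E2)) (by intro x hx; simp at hx ⊢; tauto) (by intro x hx; simp at hx ⊢; tauto)
  rintro p ⟨h1, h2⟩
  simp only [Finset.coe_insert, Finset.coe_singleton] at h1 h2 ⊢
  rw [memT2] at h1
  rw [memT4] at h2
  obtain ⟨a1, a2, a3⟩ := h1
  obtain ⟨b1, b2, b3⟩ := h2
  rw [convexHull_singleton, Set.mem_singleton_iff, eq_iff_coords]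
  simp only [Pi.zero_apply]
  exact ⟨by linarith, by linarith⟩

lemma inter35 : convexHull ℝ (({0, ![-1,0], ![0,-1]} : Finset E2) : Set E2) ∩ convexHull ℝ (({0, ![1,-1], ![1,0]} : Finset E2) : Set E2)
    = convexHull ℝ ((({0, ![-1,0], ![0,-1]} : Finset E2) ∩ ({0, ![1,-1], ![1,0]} : Finset E2) : Finset E2) : Set E2) := by
  apply mesh_helper (R := ({0} : Finset E2)) (by intro x hx; simp at hx ⊢; tauto) (by intro x hx; simp at hx ⊢; tauto)
  rintro p ⟨h1, h2⟩
  simp only [Finset.coe_insert, Finset.coe_singleton] at h1 h2 ⊢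
  rw [memT3] at h1
  rw [memT5] at h2
  obtain ⟨a1, a2, a3⟩ := h1
  obtain ⟨b1, b2, b3⟩ := h2
  rw [convexHull_singleton, Set.mem_singleton_iff, eq_iff_coords]
  simp only [Pi.zero_apply]
  exact ⟨by linarith, by linarith⟩

lemma inter40 : convexHull ℝ (({0, ![0,-1], ![1,-1]} : Finset E2) : Set E2) ∩ convexHull ℝ (({0, ![1,0], ![0,1]} : Finset E2) : Set E2)
    = convexHull ℝ ((({0, ![0,-1], ![1,-1]} : Finset E2) ∩ ({0, ![1,0], ![0,1]} : Finset E2) : Finset E2) : Set E2) := by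
  apply mesh_helper (R := ({0} : Finset E2)) (by intro x hx; simp at hx ⊢; tauto) (by intro x hx; simp at hx ⊢; tauto)
  rintro p ⟨h1, h2⟩
  simp only [Finset.coe_insert, Finset.coe_singleton] at h1 h2 ⊢
  rw [memT4] at h1
  rw [memT0] at h2
  obtain ⟨a1, a2, a3⟩ := h1
  obtain ⟨b1, b2, b3⟩ := h2
  rw [convexHull_singleton, Set.mem_singleton_iff, eq_iff_coords]
  simp only [Pi.zero_apply]
  exact ⟨by linarith, by linarith⟩

lemma inter51 : convexHull ℝ (({0, ![1,-1], ![1,0]} : Finset E2) : Set E2) ∩ convexHull ℝ (({0, ![0,1], ![-1,1]} : Finset E2) : Set E2)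
    = convexHull ℝ ((({0, ![1,-1], ![1,0]} : Finset E2) ∩ ({0, ![0,1], ![-1,1]} : Finset E2) : Finset E2) : Set E2) := by
  apply mesh_helper (R := ({0} : Finset E2)) (by intro x hx; simp at hx ⊢; tauto) (by intro x hx; simp at hx ⊢; tauto)
  rintro p ⟨h1, h2⟩
  simp only [Finset.coe_insert, Finset.coe_singleton] at h1 h2 ⊢
  rw [memT5] at h1
  rw [memT1] at h2
  obtain ⟨a1, a2, a3⟩ := h1
  obtain ⟨b1, b2, b3⟩ := h2
  rw [convexHull_singleton, Set.mem_singleton_iff, eq_iff_coords]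
  simp only [Pi.zero_apply]
  exact ⟨by linarith, by linarith⟩

lemma inter03 : convexHull ℝ (({0, ![1,0], ![0,1]} : Finset E2) : Set E2) ∩ convexHull ℝ (({0, ![-1,0], ![0,-1]} : Finset E2) : Set E2)
    = convexHull ℝ ((({0, ![1,0], ![0,1]} : Finset E2) ∩ ({0, ![-1,0], ![0,-1]} : Finset E2) : Finset E2) : Set E2) := by
  apply mesh_helper (R := ({0} : Finset E2)) (by intro x hx; simp at hx ⊢; tauto) (by intro x hx; simp at hx ⊢; tauto)
  rintro p ⟨h1, h2⟩
  simp only [Finset.coe_insert, Finset.coe_singleton] at h1 h2 ⊢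
  rw [memT0] at h1
  rw [memT3] at h2
  obtain ⟨a1, a2, a3⟩ := h1
  obtain ⟨b1, b2, b3⟩ := h2
  rw [convexHull_singleton, Set.mem_singleton_iff, eq_iff_coords]
  simp only [Pi.zero_apply]
  exact ⟨by linarith, by linarith⟩

lemma inter14 : convexHull ℝ (({0, ![0,1], ![-1,1]} : Finset E2) : Set E2) ∩ convexHull ℝ (({0, ![0,-1], ![1,-1]} : Finset E2) : Set E2)
    = convexHull ℝ ((({0, ![0,1], ![-1,1]} : Finset E2) ∩ ({0, ![0,-1], ![1,-1]} : Finset E2) : Finset E2) : Set E2) := by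
  apply mesh_helper (R := ({0} : Finset E2)) (by intro x hx; simp at hx ⊢; tauto) (by intro x hx; simp at hx ⊢; tauto)
  rintro p ⟨h1, h2⟩
  simp only [Finset.coe_insert, Finset.coe_singleton] at h1 h2 ⊢
  rw [memT1] at h1
  rw [memT4] at h2
  obtain ⟨a1, a2, a3⟩ := h1
  obtain ⟨b1, b2, b3⟩ := h2
  rw [convexHull_singleton, Set.mem_singleton_iff, eq_iff_coords]
  simp only [Pi.zero_apply]
  exact ⟨by linarith, by linarith⟩

lemma inter25 : convexHull ℝ (({0, ![-1,1], ![-1,0]} : Finset E2) : Set E2) ∩ convexHull ℝ (({0, ![1,-1], ![1,0]} : Finset E2) : Set E2)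
    = convexHull ℝ ((({0, ![-1,1], ![-1,0]} : Finset E2) ∩ ({0, ![1,-1], ![1,0]} : Finset E2) : Finset E2) : Set E2) := by
  apply mesh_helper (R := ({0} : Finset E2)) (by intro x hx; simp at hx ⊢; tauto) (by intro x hx; simp at hx ⊢; tauto)
  rintro p ⟨h1, h2⟩
  simp only [Finset.coe_insert, Finset.coe_singleton] at h1 h2 ⊢
  rw [memT2] at h1
  rw [memT5] at h2
  obtain ⟨a1, a2, a3⟩ := h1
  obtain ⟨b1, b2, b3⟩ := h2
  rw [convexHull_singleton, Set.mem_singleton_iff, eq_iff_coords]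
  simp only [Pi.zero_apply]
  exact ⟨by linarith, by linarith⟩

lemma graph_null (f : ℝ → ℝ) (hf : Measurable f) :
    (MeasureTheory.volume : MeasureTheory.Measure (ℝ × ℝ)) {p : ℝ × ℝ | p.2 = f p.1} = 0 := by
  rw [MeasureTheory.Measure.volume_eq_prod,
    MeasureTheory.Measure.prod_apply (measurableSet_graph hf)]
  have h : ∀ x : ℝ, (Prod.mk x ⁻¹' {p : ℝ × ℝ | p.2 = f p.1}) = {f x} := fun x => by
    ext y; simp
  simp [h]

lemma vol_S2 : (MeasureTheory.volume : MeasureTheory.Measure (ℝ × ℝ))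
    {q : ℝ × ℝ | 0 ≤ q.1 ∧ 0 ≤ q.2 ∧ q.1 + q.2 ≤ 1} = ENNReal.ofReal (1/2) := by
  have hint : ∫ y in Set.Icc (0:ℝ) 1, ((fun x : ℝ => 1 - x) - (fun _ : ℝ => (0:ℝ))) y = 1/2 := by
    simp only [Pi.sub_apply, sub_zero]
    rw [MeasureTheory.integral_Icc_eq_integral_Ioc,
      ← intervalIntegral.integral_of_le (by norm_num : (0:ℝ) ≤ 1)]
    rw [intervalIntegral.integral_sub intervalIntegrable_const intervalIntegral.intervalIntegrable_id]
    simp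
    norm_num
  have f_int : MeasureTheory.IntegrableOn (fun _ : ℝ => (0:ℝ)) (Set.Icc (0:ℝ) 1) :=
    (by continuity : Continuous fun _ : ℝ => (0:ℝ)).integrableOn_Icc
  have g_int : MeasureTheory.IntegrableOn (fun x : ℝ => 1 - x) (Set.Icc (0:ℝ) 1) :=
    (by continuity : Continuous fun x : ℝ => 1 - x).integrableOn_Icc
  have hR : (MeasureTheory.volume : MeasureTheory.Measure (ℝ×ℝ))
      (regionBetween (fun _ : ℝ => (0:ℝ)) (fun x : ℝ => 1 - x) (Set.Icc (0:ℝ) 1))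
        = ENNReal.ofReal (1/2) := by
    rw [MeasureTheory.Measure.volume_eq_prod]
    rw [volume_regionBetween_eq_integral f_int g_int
      measurableSet_Icc (fun x hx => by simp at hx ⊢; linarith [hx.2])]
    rw [hint]
  apply le_antisymm
  · have hsub : {q : ℝ × ℝ | 0 ≤ q.1 ∧ 0 ≤ q.2 ∧ q.1 + q.2 ≤ 1} ⊆
        regionBetween (fun _ : ℝ => (0:ℝ)) (fun x : ℝ => 1 - x) (Set.Icc (0:ℝ) 1)
          ∪ ({p : ℝ × ℝ | p.2 = (fun _ : ℝ => (0:ℝ)) p.1} ∪ {p : ℝ × ℝ | p.2 = (fun x : ℝ => 1 - x) p.1}) := by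
      rintro ⟨x, y⟩ ⟨h1, h2, h3⟩
      rcases eq_or_lt_of_le h2 with h | h
      · exact Or.inr (Or.inl h.symm)
      rcases eq_or_lt_of_le (by linarith : y ≤ 1 - x) with h' | h'
      · exact Or.inr (Or.inr h')
      · exact Or.inl ⟨⟨h1, by linarith⟩, h, h'⟩
    calc (MeasureTheory.volume : MeasureTheory.Measure (ℝ×ℝ)) {q : ℝ × ℝ | 0 ≤ q.1 ∧ 0 ≤ q.2 ∧ q.1 + q.2 ≤ 1}
        ≤ _ := MeasureTheory.measure_mono hsub
      _ ≤ (MeasureTheory.volume : MeasureTheory.Measure (ℝ×ℝ))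
            (regionBetween (fun _ : ℝ => (0:ℝ)) (fun x : ℝ => 1 - x) (Set.Icc (0:ℝ) 1))
            + ((MeasureTheory.volume : MeasureTheory.Measure (ℝ×ℝ)) {p : ℝ × ℝ | p.2 = (fun _ : ℝ => (0:ℝ)) p.1}
              + (MeasureTheory.volume : MeasureTheory.Measure (ℝ×ℝ)) {p : ℝ × ℝ | p.2 = (fun x : ℝ => 1 - x) p.1}) :=
          le_trans (MeasureTheory.measure_union_le _ _)
            (by gcongr; exact MeasureTheory.measure_union_le _ _)
      _ = ENNReal.ofReal (1/2) := by
          rw [hR, graph_null _ measurable_const,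
            graph_null _ (by continuity : Continuous fun x : ℝ => 1 - x).measurable]
          simp
  · rw [← hR]
    apply MeasureTheory.measure_mono
    rintro ⟨x, y⟩ ⟨⟨hx1, _⟩, hy1, hy2⟩
    exact ⟨hx1, le_of_lt hy1, by simp at hy2; linarith⟩

lemma vol_std : (MeasureTheory.volume : MeasureTheory.Measure E2)
    (convexHull ℝ (({0, ![1,0], ![0,1]} : Finset E2) : Set E2)) = ENNReal.ofReal (1/2) := by
  have hset : (convexHull ℝ (({0, ![1,0], ![0,1]} : Finset E2) : Set E2))
      = (MeasurableEquiv.finTwoArrow : (Fin 2 → ℝ) ≃ᵐ ℝ × ℝ) ⁻¹'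
          {q : ℝ × ℝ | 0 ≤ q.1 ∧ 0 ≤ q.2 ∧ q.1 + q.2 ≤ 1} := by
    ext p
    simp only [Finset.coe_insert, Finset.coe_singleton]
    rw [memT0]
    simp [MeasurableEquiv.finTwoArrow]
  have hmeas : MeasurableSet {q : ℝ × ℝ | 0 ≤ q.1 ∧ 0 ≤ q.2 ∧ q.1 + q.2 ≤ 1} := by
    apply MeasurableSet.inter (measurableSet_le measurable_const measurable_fst)
    exact MeasurableSet.inter (measurableSet_le measurable_const measurable_snd)
      (measurableSet_le (measurable_fst.add measurable_snd) measurable_const)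
  rw [hset, (MeasureTheory.volume_preserving_finTwoArrow ℝ).measure_preimage
    hmeas.nullMeasurableSet]
  exact vol_S2

def Bmat (a b : E2) : Matrix (Fin 2) (Fin 2) ℝ := !![a 0, b 0; a 1, b 1]

lemma mapsto (a b : E2) (x y : ℝ) :
    Matrix.toLin' (Bmat a b) ![x, y] = x • a + y • b := by
  funext i
  fin_cases i <;>
    simp [Bmat, Matrix.toLin'_apply, Matrix.mulVec, dotProduct, Fin.sum_univ_two] <;> ring

lemma image_tri (a b : E2) :
    (Matrix.toLin' (Bmat a b)) '' (({0, ![1,0], ![0,1]} : Finset E2) : Set E2)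
      = (({0, a, b} : Finset E2) : Set E2) := by
  simp only [Finset.coe_insert, Finset.coe_singleton, Set.image_insert_eq, Set.image_singleton,
    map_zero]
  rw [show Matrix.toLin' (Bmat a b) ![1, 0] = a from by rw [mapsto]; module,
    show Matrix.toLin' (Bmat a b) ![0, 1] = b from by rw [mapsto]; module]

lemma vol_tri (a b : E2) (hdet : |a 0 * b 1 - a 1 * b 0| = 1) :
    MeasureTheory.volume (convexHull ℝ (({0, a, b} : Finset E2) : Set E2))
      = ENNReal.ofReal (1/2) := by
  rw [← image_tri a b, ← LinearMap.image_convexHull,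
    MeasureTheory.Measure.addHaar_image_linearMap, LinearMap.det_toLin']
  rw [show (Bmat a b).det = a 0 * b 1 - a 1 * b 0 from by
    rw [Bmat, Matrix.det_fin_two_of]; ring]
  rw [hdet, vol_std]
  simp

lemma inter_transfer (φ : E2 ≃ₗ[ℝ] E2) (S₀ T₀ : Finset E2)
    (h : convexHull ℝ (S₀ : Set E2) ∩ convexHull ℝ (T₀ : Set E2)
      = convexHull ℝ ((S₀ ∩ T₀ : Finset E2) : Set E2)) :
    convexHull ℝ ((S₀.image φ : Finset E2) : Set E2)
        ∩ convexHull ℝ ((T₀.image φ : Finset E2) : Set E2)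
      = convexHull ℝ ((S₀.image φ ∩ T₀.image φ : Finset E2) : Set E2) := by
  rw [← Finset.image_inter _ _ φ.injective]
  simp only [Finset.coe_image]
  rw [show ⇑φ = ⇑(φ.toLinearMap) from rfl,
    ← LinearMap.image_convexHull, ← LinearMap.image_convexHull, ← LinearMap.image_convexHull,
    ← Set.image_inter (f := ⇑φ.toLinearMap) φ.injective, h]

lemma std_nhds :
    (convexHull ℝ (({0, ![1,0], ![0,1]} : Finset E2) : Set E2)
      ∪ convexHull ℝ (({0, ![0,1], ![-1,1]} : Finset E2) : Set E2)
      ∪ convexHull ℝ (({0, ![-1,1], ![-1,0]} : Finset E2) : Set E2)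
      ∪ convexHull ℝ (({0, ![-1,0], ![0,-1]} : Finset E2) : Set E2)
      ∪ convexHull ℝ (({0, ![0,-1], ![1,-1]} : Finset E2) : Set E2)
      ∪ convexHull ℝ (({0, ![1,-1], ![1,0]} : Finset E2) : Set E2)) ∈ nhds (0 : E2) := by
  have ho : IsOpen {p : E2 | |p 0| + |p 1| < 1} := by
    have : Continuous fun p : E2 => |p 0| + |p 1| := by continuity
    exact isOpen_lt this continuous_const
  refine Filter.mem_of_superset (ho.mem_nhds (by norm_num)) ?_
  intro p hp
  simp only [Set.mem_setOf_eq] at hp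
  have l1 := le_abs_self (p 0); have l2 := neg_abs_le (p 0)
  have l3 := le_abs_self (p 1); have l4 := neg_abs_le (p 1)
  simp only [Set.mem_union, Finset.coe_insert, Finset.coe_singleton]
  rcases le_or_gt 0 (p 0) with hx | hx <;> rcases le_or_gt 0 (p 1) with hy | hy
  · exact Or.inl (Or.inl (Or.inl (Or.inl (Or.inl ((memT0 p).2 ⟨hx, hy, by linarith⟩)))))
  · rcases le_or_gt 0 (p 0 + p 1) with hxy | hxy
    · exact Or.inr ((memT5 p).2 ⟨by linarith, hxy, by linarith⟩)
    · exact Or.inl (Or.inr ((memT4 p).2 ⟨hx, by linarith, by linarith⟩))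
  · rcases le_or_gt 0 (p 0 + p 1) with hxy | hxy
    · exact Or.inl (Or.inl (Or.inl (Or.inl (Or.inr ((memT1 p).2 ⟨by linarith, hxy, by linarith⟩)))))
    · exact Or.inl (Or.inl (Or.inl (Or.inr ((memT2 p).2 ⟨hy, by linarith, by linarith⟩))))
  · exact Or.inl (Or.inl (Or.inr ((memT3 p).2 ⟨by linarith, by linarith, by linarith⟩)))

end Stmt6Aux

/-- Proposition `propNeigh2`: explicit construction of an `M`-reduced mesh in dimension 2
from an `M`-reduced basis. -/
theorem stmt6 (M : Matrix (Fin 2) (Fin 2) ℝ) (hM : M.PosDef)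
    (u₀ : Fin 2 → Fin 2 → ℝ) (hu₀ : IsReducedBasis M u₀)
    (ε : ℝ) (hε : ε = 1 ∨ ε = -1)
    (u v : Fin 2 → ℝ) (hu : u = u₀ 0) (hv : v = ε • u₀ 1)
    (huv : 0 ≤ u ⬝ᵥ M.mulVec v)
    (𝒯 : Finset (Finset (Fin 2 → ℝ)))
    (h𝒯 : 𝒯 = {{0, u, v}, {0, v, v - u}, {0, v - u, -u},
               {0, -u, -v}, {0, -v, u - v}, {0, u - v, u}}) :
    IsReducedMesh M 𝒯 := by
  obtain ⟨hInt, hDet, hMin⟩ := hu₀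
  have hv' : v = u₀ 1 ∨ v = -(u₀ 1) := by
    rcases hε with rfl | rfl
    · left; rw [hv, one_smul]
    · right; rw [hv, neg_one_smul]
  set D := u 0 * v 1 - u 1 * v 0 with hDdef
  have hD1 : |D| = 1 := by
    have h2 : (Matrix.of u₀).det = u₀ 0 0 * u₀ 1 1 - u₀ 0 1 * u₀ 1 0 := by
      rw [Matrix.det_fin_two]; rfl
    have h3 : D = ε * (Matrix.of u₀).det := by
      rw [hDdef, h2, hu, hv]
      simp only [Pi.smul_apply, smul_eq_mul]
      ring
    rw [h3, abs_mul]
    rcases hε with rfl | rfl <;> rw [hDet] <;> norm_num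
  have hD0 : D ≠ 0 := fun h => by rw [h] at hD1; norm_num at hD1
  -- integrality
  have hIu : IsIntVec u := by rw [hu]; exact hInt 0
  have hIv : IsIntVec v := by
    rcases hv' with h | h
    · rw [h]; exact hInt 1
    · intro i; obtain ⟨m, hm⟩ := hInt 1 i
      exact ⟨-m, by rw [h, Pi.neg_apply, hm]; push_cast; ring⟩
  have hIneg : ∀ x : Fin 2 → ℝ, IsIntVec x → IsIntVec (-x) := by
    intro x hx i; obtain ⟨m, hm⟩ := hx i
    exact ⟨-m, by rw [Pi.neg_apply, hm]; push_cast; ring⟩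
  have hIsub : ∀ x y : Fin 2 → ℝ, IsIntVec x → IsIntVec y → IsIntVec (x - y) := by
    intro x y hx hy i; obtain ⟨m, hm⟩ := hx i; obtain ⟨k, hk⟩ := hy i
    exact ⟨m - k, by rw [Pi.sub_apply, hm, hk]; push_cast; ring⟩
  have hI0 : IsIntVec (0 : Fin 2 → ℝ) := fun i => ⟨0, by simp⟩
  -- quadratic form facts
  have hq : ∀ x : Fin 2 → ℝ, 0 ≤ x ⬝ᵥ M.mulVec x := by
    intro x
    have h := hM.posSemidef.dotProduct_mulVec_nonneg x
    first
      | exact h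
      | simpa using h
  have h01 : M 0 1 = M 1 0 := by
    have h := congrFun (congrFun hM.1 0) 1
    first
      | exact h.symm
      | simpa using h.symm
  have hMT : Mᵀ = M := by
    ext i j
    fin_cases i <;> fin_cases j <;> simp [Matrix.transpose_apply, h01]
  have hsym : ∀ x y : Fin 2 → ℝ, x ⬝ᵥ M.mulVec y = y ⬝ᵥ M.mulVec x := by
    intro x y
    rw [Matrix.dotProduct_mulVec, ← Matrix.mulVec_transpose, hMT, dotProduct_comm]
  have E1 : v ⬝ᵥ M.mulVec (v - u) = v ⬝ᵥ M.mulVec v - u ⬝ᵥ M.mulVec v := by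
    rw [Matrix.mulVec_sub, dotProduct_sub, hsym v u]
  have E2 : (v - u) ⬝ᵥ M.mulVec v = v ⬝ᵥ M.mulVec v - u ⬝ᵥ M.mulVec v := by
    rw [sub_dotProduct]
  have E3 : (v - u) ⬝ᵥ M.mulVec (v - u)
      = u ⬝ᵥ M.mulVec u + v ⬝ᵥ M.mulVec v - 2*(u ⬝ᵥ M.mulVec v) := by
    rw [Matrix.mulVec_sub, dotProduct_sub, sub_dotProduct, sub_dotProduct,
      hsym v u]
    ring
  have E4 : (v - u) ⬝ᵥ M.mulVec (-u) = u ⬝ᵥ M.mulVec u - u ⬝ᵥ M.mulVec v := by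
    rw [Matrix.mulVec_neg, dotProduct_neg, sub_dotProduct, hsym v u]
    ring
  have E5 : (-u) ⬝ᵥ M.mulVec (v - u) = u ⬝ᵥ M.mulVec u - u ⬝ᵥ M.mulVec v := by
    rw [Matrix.mulVec_sub, dotProduct_sub, neg_dotProduct, neg_dotProduct]
    ring
  have E6 : (-u) ⬝ᵥ M.mulVec (-u) = u ⬝ᵥ M.mulVec u := by
    rw [Matrix.mulVec_neg, dotProduct_neg, neg_dotProduct]
    ring
  have E7 : (-u) ⬝ᵥ M.mulVec (-v) = u ⬝ᵥ M.mulVec v := by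
    rw [Matrix.mulVec_neg, dotProduct_neg, neg_dotProduct]
    ring
  have E8 : (-v) ⬝ᵥ M.mulVec (-u) = u ⬝ᵥ M.mulVec v := by
    rw [Matrix.mulVec_neg, dotProduct_neg, neg_dotProduct, hsym v u]
    ring
  have E9 : (-v) ⬝ᵥ M.mulVec (-v) = v ⬝ᵥ M.mulVec v := by
    rw [Matrix.mulVec_neg, dotProduct_neg, neg_dotProduct]
    ring
  have E10 : (-v) ⬝ᵥ M.mulVec (u - v) = v ⬝ᵥ M.mulVec v - u ⬝ᵥ M.mulVec v := by
    rw [Matrix.mulVec_sub, dotProduct_sub, neg_dotProduct, neg_dotProduct,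
      hsym v u]
    ring
  have E11 : (u - v) ⬝ᵥ M.mulVec (-v) = v ⬝ᵥ M.mulVec v - u ⬝ᵥ M.mulVec v := by
    rw [Matrix.mulVec_neg, dotProduct_neg, sub_dotProduct]
    ring
  have E12 : (u - v) ⬝ᵥ M.mulVec (u - v)
      = u ⬝ᵥ M.mulVec u + v ⬝ᵥ M.mulVec v - 2*(u ⬝ᵥ M.mulVec v) := by
    rw [Matrix.mulVec_sub, dotProduct_sub, sub_dotProduct, sub_dotProduct,
      hsym v u]
    ring
  have E13 : (u - v) ⬝ᵥ M.mulVec u = u ⬝ᵥ M.mulVec u - u ⬝ᵥ M.mulVec v := by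
    rw [sub_dotProduct, hsym v u]
  have E14 : u ⬝ᵥ M.mulVec (u - v) = u ⬝ᵥ M.mulVec u - u ⬝ᵥ M.mulVec v := by
    rw [Matrix.mulVec_sub, dotProduct_sub]
  -- minimality facts
  have hvnot : ¬ InLatticeSpan u₀ 0 v := by
    rintro ⟨c, hc, hsum⟩
    have c0 : c 0 = 0 := hc 0 (by simp)
    have c1 : c 1 = 0 := hc 1 (by simp)
    rw [Fin.sum_univ_two, c0, c1] at hsum
    simp only [Int.cast_zero, zero_smul, add_zero] at hsum
    apply hD0
    rw [hDdef, hsum]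
    simp
  have hA_le_B : u ⬝ᵥ M.mulVec u ≤ v ⬝ᵥ M.mulVec v := by
    have h2 := hMin 0 v hIv hvnot
    rw [← hu] at h2
    unfold normM at h2
    exact (Real.sqrt_le_sqrt_iff (hq v)).mp h2
  have hquv : u₀ 1 ⬝ᵥ M.mulVec (u₀ 1) = v ⬝ᵥ M.mulVec v := by
    rcases hv' with h | h
    · rw [h]
    · rw [h, Matrix.mulVec_neg, dotProduct_neg, neg_dotProduct]
      ring
  have hvunot : ¬ InLatticeSpan u₀ 1 (v - u) := by
    rintro ⟨c, hc, hsum⟩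
    have c1 : c 1 = 0 := hc 1 (by simp)
    rw [Fin.sum_univ_two, c1] at hsum
    simp only [Int.cast_zero, zero_smul, add_zero] at hsum
    rw [← hu] at hsum
    have h0 := congrFun hsum 0
    have h1 := congrFun hsum 1
    simp only [Pi.sub_apply, Pi.smul_apply, smul_eq_mul] at h0 h1
    apply hD0
    rw [hDdef]
    linear_combination u 0 * h1 - u 1 * h0
  have h2c : 2 * (u ⬝ᵥ M.mulVec v) ≤ u ⬝ᵥ M.mulVec u := by
    have h2 := hMin 1 (v - u) (hIsub v u hIv hIu) hvunot
    unfold normM at h2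
    rw [hquv] at h2
    have h3 := (Real.sqrt_le_sqrt_iff (hq (v - u))).mp h2
    rw [E3] at h3
    linarith
  -- the linear equivalence
  have hBdet : (Stmt6Aux.Bmat u v).det = D := by
    rw [hDdef, Stmt6Aux.Bmat, Matrix.det_fin_two_of]
    ring
  have hunit : IsUnit (Stmt6Aux.Bmat u v).det := by
    rw [hBdet]; exact isUnit_iff_ne_zero.mpr hD0
  let e : (Fin 2 → ℝ) ≃ₗ[ℝ] (Fin 2 → ℝ) :=
    Matrix.toLinearEquiv' _ (Matrix.invertibleOfIsUnitDet _ hunit)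
  have hecoe : ∀ x y : ℝ, e ![x, y] = x • u + y • v := fun x y => Stmt6Aux.mapsto u v x y
  have h0e : e (0 : Fin 2 → ℝ) = 0 := map_zero _
  have himg0 : Finset.image ⇑e ({0, ![1,0], ![0,1]} : Finset (Fin 2 → ℝ)) = {0, u, v} := by
    rw [Finset.image_insert, Finset.image_insert, Finset.image_singleton, h0e,
      show e ![1,0] = u from by rw [hecoe]; module,
      show e ![0,1] = v from by rw [hecoe]; module]
  have himg1 : Finset.image ⇑e ({0, ![0,1], ![-1,1]} : Finset (Fin 2 → ℝ)) = {0, v, v - u} := by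
    rw [Finset.image_insert, Finset.image_insert, Finset.image_singleton, h0e,
      show e ![0,1] = v from by rw [hecoe]; module,
      show e ![-1,1] = v - u from by rw [hecoe]; module]
  have himg2 : Finset.image ⇑e ({0, ![-1,1], ![-1,0]} : Finset (Fin 2 → ℝ)) = {0, v - u, -u} := by
    rw [Finset.image_insert, Finset.image_insert, Finset.image_singleton, h0e,
      show e ![-1,1] = v - u from by rw [hecoe]; module,
      show e ![-1,0] = -u from by rw [hecoe]; module]
  have himg3 : Finset.image ⇑e ({0, ![-1,0], ![0,-1]} : Finset (Fin 2 → ℝ)) = {0, -u, -v} := by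
    rw [Finset.image_insert, Finset.image_insert, Finset.image_singleton, h0e,
      show e ![-1,0] = -u from by rw [hecoe]; module,
      show e ![0,-1] = -v from by rw [hecoe]; module]
  have himg4 : Finset.image ⇑e ({0, ![0,-1], ![1,-1]} : Finset (Fin 2 → ℝ)) = {0, -v, u - v} := by
    rw [Finset.image_insert, Finset.image_insert, Finset.image_singleton, h0e,
      show e ![0,-1] = -v from by rw [hecoe]; module,
      show e ![1,-1] = u - v from by rw [hecoe]; module]
  have himg5 : Finset.image ⇑e ({0, ![1,-1], ![1,0]} : Finset (Fin 2 → ℝ)) = {0, u - v, u} := by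
    rw [Finset.image_insert, Finset.image_insert, Finset.image_singleton, h0e,
      show e ![1,-1] = u - v from by rw [hecoe]; module,
      show e ![1,0] = u from by rw [hecoe]; module]
  have hconvimg : ∀ W : Finset (Fin 2 → ℝ),
      convexHull ℝ ((W.image ⇑e : Finset (Fin 2 → ℝ)) : Set (Fin 2 → ℝ))
        = ⇑e '' convexHull ℝ (W : Set (Fin 2 → ℝ)) := by
    intro W
    rw [Finset.coe_image, show ⇑e = ⇑e.toLinearMap from rfl, LinearMap.image_convexHull]
  have N1 : 0 ≤ u ⬝ᵥ M.mulVec u := hq u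
  have N2 : 0 ≤ v ⬝ᵥ M.mulVec v := hq v
  have N4 : 0 ≤ v ⬝ᵥ M.mulVec u := by rw [hsym v u]; exact huv
  have N5 : 0 ≤ v ⬝ᵥ M.mulVec (v - u) := by rw [E1]; linarith
  have N6 : 0 ≤ (v - u) ⬝ᵥ M.mulVec v := by rw [E2]; linarith
  have N7 : 0 ≤ (v - u) ⬝ᵥ M.mulVec (v - u) := hq _
  have N8 : 0 ≤ (v - u) ⬝ᵥ M.mulVec (-u) := by rw [E4]; linarith
  have N9 : 0 ≤ (-u) ⬝ᵥ M.mulVec (v - u) := by rw [E5]; linarith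
  have N10 : 0 ≤ (-u) ⬝ᵥ M.mulVec (-u) := by rw [E6]; exact hq u
  have N11 : 0 ≤ (-u) ⬝ᵥ M.mulVec (-v) := by rw [E7]; exact huv
  have N12 : 0 ≤ (-v) ⬝ᵥ M.mulVec (-u) := by rw [E8]; exact huv
  have N13 : 0 ≤ (-v) ⬝ᵥ M.mulVec (-v) := by rw [E9]; exact hq v
  have N14 : 0 ≤ (-v) ⬝ᵥ M.mulVec (u - v) := by rw [E10]; linarith
  have N15 : 0 ≤ (u - v) ⬝ᵥ M.mulVec (-v) := by rw [E11]; linarith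
  have N16 : 0 ≤ (u - v) ⬝ᵥ M.mulVec (u - v) := by rw [E12]; linarith
  have N17 : 0 ≤ (u - v) ⬝ᵥ M.mulVec u := by rw [E13]; linarith
  have N18 : 0 ≤ u ⬝ᵥ M.mulVec (u - v) := by rw [E14]; linarith
  have hIvu : IsIntVec (v - u) := hIsub v u hIv hIu
  have hInu : IsIntVec (-u) := hIneg u hIu
  have hInv : IsIntVec (-v) := hIneg v hIv
  have hIuv : IsIntVec (u - v) := hIsub u v hIu hIv
  refine ⟨⟨?_, ?_⟩, ?_, ?_, ?_, ?_, ?_⟩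
  · -- simplices
    intro V hV
    rw [h𝒯] at hV
    simp only [Finset.mem_insert, Finset.mem_singleton] at hV
    rcases hV with rfl | rfl | rfl | rfl | rfl | rfl
    · exact Stmt6Aux.isSimplex_tri (a := u) (b := v) (by
        intro h0
        try simp only [Pi.sub_apply, Pi.neg_apply] at h0
        exact hD0 (by rw [hDdef]; linear_combination h0))
    · exact Stmt6Aux.isSimplex_tri (a := v) (b := v - u) (by
        intro h0
        try simp only [Pi.sub_apply, Pi.neg_apply] at h0
        exact hD0 (by rw [hDdef]; linear_combination h0))
    · exact Stmt6Aux.isSimplex_tri (a := v - u) (b := -u) (by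
        intro h0
        try simp only [Pi.sub_apply, Pi.neg_apply] at h0
        exact hD0 (by rw [hDdef]; linear_combination h0))
    · exact Stmt6Aux.isSimplex_tri (a := -u) (b := -v) (by
        intro h0
        try simp only [Pi.sub_apply, Pi.neg_apply] at h0
        exact hD0 (by rw [hDdef]; linear_combination h0))
    · exact Stmt6Aux.isSimplex_tri (a := -v) (b := u - v) (by
        intro h0
        try simp only [Pi.sub_apply, Pi.neg_apply] at h0
        exact hD0 (by rw [hDdef]; linear_combination h0))
    · exact Stmt6Aux.isSimplex_tri (a := u - v) (b := u) (by
        intro h0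
        try simp only [Pi.sub_apply, Pi.neg_apply] at h0
        exact hD0 (by rw [hDdef]; linear_combination h0))
  · -- intersections
    intro S hS T hT
    rw [h𝒯] at hS hT
    simp only [Finset.mem_insert, Finset.mem_singleton] at hS hT
    rcases hS with rfl | rfl | rfl | rfl | rfl | rfl <;>
      rcases hT with rfl | rfl | rfl | rfl | rfl | rfl
    · rw [Set.inter_self, Finset.inter_self]
    · rw [← himg0, ← himg1]
      exact Stmt6Aux.inter_transfer e _ _ Stmt6Aux.inter01
    · rw [← himg0, ← himg2]
      exact Stmt6Aux.inter_transfer e _ _ Stmt6Aux.inter02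
    · rw [← himg0, ← himg3]
      exact Stmt6Aux.inter_transfer e _ _ Stmt6Aux.inter03
    · rw [← himg0, ← himg4]
      exact Stmt6Aux.inter_transfer e _ _ (by rw [Set.inter_comm, Finset.inter_comm]; exact Stmt6Aux.inter40)
    · rw [← himg0, ← himg5]
      exact Stmt6Aux.inter_transfer e _ _ (by rw [Set.inter_comm, Finset.inter_comm]; exact Stmt6Aux.inter50)
    · rw [← himg1, ← himg0]
      exact Stmt6Aux.inter_transfer e _ _ (by rw [Set.inter_comm, Finset.inter_comm]; exact Stmt6Aux.inter01)
    · rw [Set.inter_self, Finset.inter_self]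
    · rw [← himg1, ← himg2]
      exact Stmt6Aux.inter_transfer e _ _ Stmt6Aux.inter12
    · rw [← himg1, ← himg3]
      exact Stmt6Aux.inter_transfer e _ _ Stmt6Aux.inter13
    · rw [← himg1, ← himg4]
      exact Stmt6Aux.inter_transfer e _ _ Stmt6Aux.inter14
    · rw [← himg1, ← himg5]
      exact Stmt6Aux.inter_transfer e _ _ (by rw [Set.inter_comm, Finset.inter_comm]; exact Stmt6Aux.inter51)
    · rw [← himg2, ← himg0]
      exact Stmt6Aux.inter_transfer e _ _ (by rw [Set.inter_comm, Finset.inter_comm]; exact Stmt6Aux.inter02)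
    · rw [← himg2, ← himg1]
      exact Stmt6Aux.inter_transfer e _ _ (by rw [Set.inter_comm, Finset.inter_comm]; exact Stmt6Aux.inter12)
    · rw [Set.inter_self, Finset.inter_self]
    · rw [← himg2, ← himg3]
      exact Stmt6Aux.inter_transfer e _ _ Stmt6Aux.inter23
    · rw [← himg2, ← himg4]
      exact Stmt6Aux.inter_transfer e _ _ Stmt6Aux.inter24
    · rw [← himg2, ← himg5]
      exact Stmt6Aux.inter_transfer e _ _ Stmt6Aux.inter25
    · rw [← himg3, ← himg0]
      exact Stmt6Aux.inter_transfer e _ _ (by rw [Set.inter_comm, Finset.inter_comm]; exact Stmt6Aux.inter03)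
    · rw [← himg3, ← himg1]
      exact Stmt6Aux.inter_transfer e _ _ (by rw [Set.inter_comm, Finset.inter_comm]; exact Stmt6Aux.inter13)
    · rw [← himg3, ← himg2]
      exact Stmt6Aux.inter_transfer e _ _ (by rw [Set.inter_comm, Finset.inter_comm]; exact Stmt6Aux.inter23)
    · rw [Set.inter_self, Finset.inter_self]
    · rw [← himg3, ← himg4]
      exact Stmt6Aux.inter_transfer e _ _ Stmt6Aux.inter34
    · rw [← himg3, ← himg5]
      exact Stmt6Aux.inter_transfer e _ _ Stmt6Aux.inter35
    · rw [← himg4, ← himg0]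
      exact Stmt6Aux.inter_transfer e _ _ Stmt6Aux.inter40
    · rw [← himg4, ← himg1]
      exact Stmt6Aux.inter_transfer e _ _ (by rw [Set.inter_comm, Finset.inter_comm]; exact Stmt6Aux.inter14)
    · rw [← himg4, ← himg2]
      exact Stmt6Aux.inter_transfer e _ _ (by rw [Set.inter_comm, Finset.inter_comm]; exact Stmt6Aux.inter24)
    · rw [← himg4, ← himg3]
      exact Stmt6Aux.inter_transfer e _ _ (by rw [Set.inter_comm, Finset.inter_comm]; exact Stmt6Aux.inter34)
    · rw [Set.inter_self, Finset.inter_self]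
    · rw [← himg4, ← himg5]
      exact Stmt6Aux.inter_transfer e _ _ Stmt6Aux.inter45
    · rw [← himg5, ← himg0]
      exact Stmt6Aux.inter_transfer e _ _ Stmt6Aux.inter50
    · rw [← himg5, ← himg1]
      exact Stmt6Aux.inter_transfer e _ _ Stmt6Aux.inter51
    · rw [← himg5, ← himg2]
      exact Stmt6Aux.inter_transfer e _ _ (by rw [Set.inter_comm, Finset.inter_comm]; exact Stmt6Aux.inter25)
    · rw [← himg5, ← himg3]
      exact Stmt6Aux.inter_transfer e _ _ (by rw [Set.inter_comm, Finset.inter_comm]; exact Stmt6Aux.inter35)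
    · rw [← himg5, ← himg4]
      exact Stmt6Aux.inter_transfer e _ _ (by rw [Set.inter_comm, Finset.inter_comm]; exact Stmt6Aux.inter45)
    · rw [Set.inter_self, Finset.inter_self]
  · -- neighborhood of 0
    have hUnhds : ⇑e '' (convexHull ℝ (({0, ![1,0], ![0,1]} : Finset (Fin 2 → ℝ)) : Set (Fin 2 → ℝ))
        ∪ convexHull ℝ (({0, ![0,1], ![-1,1]} : Finset (Fin 2 → ℝ)) : Set (Fin 2 → ℝ))
        ∪ convexHull ℝ (({0, ![-1,1], ![-1,0]} : Finset (Fin 2 → ℝ)) : Set (Fin 2 → ℝ))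
        ∪ convexHull ℝ (({0, ![-1,0], ![0,-1]} : Finset (Fin 2 → ℝ)) : Set (Fin 2 → ℝ))
        ∪ convexHull ℝ (({0, ![0,-1], ![1,-1]} : Finset (Fin 2 → ℝ)) : Set (Fin 2 → ℝ))
        ∪ convexHull ℝ (({0, ![1,-1], ![1,0]} : Finset (Fin 2 → ℝ)) : Set (Fin 2 → ℝ)))
          ∈ nhds (0 : Fin 2 → ℝ) := by
      have hh := Filter.image_mem_map (m := ⇑e) (Stmt6Aux.std_nhds)
      have hmap : Filter.map (⇑e) (nhds (0 : Fin 2 → ℝ)) = nhds (0 : Fin 2 → ℝ) := by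
        have hhom := e.toContinuousLinearEquiv.toHomeomorph.map_nhds_eq (0 : Fin 2 → ℝ)
        have hco : ⇑e.toContinuousLinearEquiv.toHomeomorph = ⇑e := rfl
        rw [hco] at hhom
        rw [hhom, h0e]
      rwa [hmap] at hh
    refine Filter.mem_of_superset hUnhds ?_
    rintro x ⟨y, hy, rfl⟩
    rcases hy with ((((h | h) | h) | h) | h) | h
    · refine Set.mem_iUnion₂.mpr ⟨({0, u, v} : Finset (Fin 2 → ℝ)), by rw [h𝒯]; simp, ?_⟩
      rw [← himg0, hconvimg]
      exact ⟨y, h, rfl⟩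
    · refine Set.mem_iUnion₂.mpr ⟨({0, v, v - u} : Finset (Fin 2 → ℝ)), by rw [h𝒯]; simp, ?_⟩
      rw [← himg1, hconvimg]
      exact ⟨y, h, rfl⟩
    · refine Set.mem_iUnion₂.mpr ⟨({0, v - u, -u} : Finset (Fin 2 → ℝ)), by rw [h𝒯]; simp, ?_⟩
      rw [← himg2, hconvimg]
      exact ⟨y, h, rfl⟩
    · refine Set.mem_iUnion₂.mpr ⟨({0, -u, -v} : Finset (Fin 2 → ℝ)), by rw [h𝒯]; simp, ?_⟩
      rw [← himg3, hconvimg]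
      exact ⟨y, h, rfl⟩
    · refine Set.mem_iUnion₂.mpr ⟨({0, -v, u - v} : Finset (Fin 2 → ℝ)), by rw [h𝒯]; simp, ?_⟩
      rw [← himg4, hconvimg]
      exact ⟨y, h, rfl⟩
    · refine Set.mem_iUnion₂.mpr ⟨({0, u - v, u} : Finset (Fin 2 → ℝ)), by rw [h𝒯]; simp, ?_⟩
      rw [← himg5, hconvimg]
      exact ⟨y, h, rfl⟩
  · -- integer vertices
    intro V hV
    rw [h𝒯] at hV
    simp only [Finset.mem_insert, Finset.mem_singleton] at hV
    rcases hV with rfl | rfl | rfl | rfl | rfl | rfl <;>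
      · intro x hx
        simp only [Finset.mem_insert, Finset.mem_singleton] at hx
        rcases hx with rfl | rfl | rfl <;> assumption
  · -- volumes
    have hfac : ENNReal.ofReal (1 / (Nat.factorial 2 : ℝ)) = ENNReal.ofReal (1/2) := by
      norm_num [Nat.factorial]
    intro V hV
    rw [h𝒯] at hV
    simp only [Finset.mem_insert, Finset.mem_singleton] at hV
    rcases hV with rfl | rfl | rfl | rfl | rfl | rfl
    · rw [hfac]
      refine Stmt6Aux.vol_tri (u) (v) ?_
      rw [show (u) 0 * (v) 1 - (u) 1 * (v) 0 = D from by
        (try rfl); all_goals ((try simp only [Pi.sub_apply, Pi.neg_apply]); rw [hDdef]; all_goals ring)]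
      exact hD1
    · rw [hfac]
      refine Stmt6Aux.vol_tri (v) (v - u) ?_
      rw [show (v) 0 * (v - u) 1 - (v) 1 * (v - u) 0 = D from by
        (try rfl); all_goals ((try simp only [Pi.sub_apply, Pi.neg_apply]); rw [hDdef]; all_goals ring)]
      exact hD1
    · rw [hfac]
      refine Stmt6Aux.vol_tri (v - u) (-u) ?_
      rw [show (v - u) 0 * (-u) 1 - (v - u) 1 * (-u) 0 = D from by
        (try rfl); all_goals ((try simp only [Pi.sub_apply, Pi.neg_apply]); rw [hDdef]; all_goals ring)]
      exact hD1
    · rw [hfac]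
      refine Stmt6Aux.vol_tri (-u) (-v) ?_
      rw [show (-u) 0 * (-v) 1 - (-u) 1 * (-v) 0 = D from by
        (try rfl); all_goals ((try simp only [Pi.sub_apply, Pi.neg_apply]); rw [hDdef]; all_goals ring)]
      exact hD1
    · rw [hfac]
      refine Stmt6Aux.vol_tri (-v) (u - v) ?_
      rw [show (-v) 0 * (u - v) 1 - (-v) 1 * (u - v) 0 = D from by
        (try rfl); all_goals ((try simp only [Pi.sub_apply, Pi.neg_apply]); rw [hDdef]; all_goals ring)]
      exact hD1
    · rw [hfac]
      refine Stmt6Aux.vol_tri (u - v) (u) ?_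
      rw [show (u - v) 0 * (u) 1 - (u - v) 1 * (u) 0 = D from by
        (try rfl); all_goals ((try simp only [Pi.sub_apply, Pi.neg_apply]); rw [hDdef]; all_goals ring)]
      exact hD1
  · -- zero is a vertex
    intro V hV
    rw [h𝒯] at hV
    simp only [Finset.mem_insert, Finset.mem_singleton] at hV
    rcases hV with rfl | rfl | rfl | rfl | rfl | rfl <;>
      exact Finset.mem_insert_self 0 _
  · -- M-products nonnegative
    intro V hV
    rw [h𝒯] at hV
    simp only [Finset.mem_insert, Finset.mem_singleton] at hV
    rcases hV with rfl | rfl | rfl | rfl | rfl | rfl <;>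
      · intro x hx y hy hx0 hy0
        simp only [Finset.mem_insert, Finset.mem_singleton] at hx hy
        rcases hx with rfl | rfl | rfl <;> rcases hy with rfl | rfl | rfl <;>
          first
            | exact absurd rfl hx0
            | exact absurd rfl hy0
            | exact huv
            | assumption

end
end
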